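/- arXiv:2211.16854 — 5 statements merged into one kernel-verified Lean document; each statement's English description precedes it below -/
import Mathlib

section
/- Let G be a finite simple graph and let H = G[W] be a primitive induced subgraph of G. If M is a module of G with W ⊄ M, then M contains at most one vertex of W, i.e., |M ∩ W| ≤ 1. -/
/-- `M` is a module of `G`: every vertex outside `M` is adjacent either to all
vertices of `M` or to none of them. -/
def IsModule {V : Type} (G : SimpleGraph V) (M : Set V) : Prop :=
  ∀ z ∉ M, (∀ x ∈ M, G.Adj z x) ∨ (∀ x ∈ M, ¬ G.Adj z x)

/-- A graph is primitive if it has at least four vertices and all of its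
modules are trivial. -/
def IsPrimitive {V : Type} (G : SimpleGraph V) : Prop :=
  4 ≤ Nat.card V ∧
    ∀ M : Set V, IsModule G M → M = ∅ ∨ (∃ x, M = {x}) ∨ M = Set.univ

/-- If `G[W]` is a primitive induced subgraph of `G` and `M` is a module of `G`
with `W ⊄ M`, then `M` contains at most one vertex of `W`. -/
theorem module_inter_primitive_card_le_one {V : Type} [Fintype V]
    (G : SimpleGraph V) (W : Set V) (hprim : IsPrimitive (G.induce W))
    (M : Set V) (hM : IsModule G M) (hW : ¬ W ⊆ M) :
    (M ∩ W).ncard ≤ 1 := by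
  set M' : Set W := {x | (x : V) ∈ M} with hM'def
  have hmod : IsModule (G.induce W) M' := by
    intro z hz
    rcases hM z hz with h | h
    · exact Or.inl fun x hx => h x hx
    · exact Or.inr fun x hx => h x hx
  have himg : M ∩ W = Subtype.val '' M' := by
    ext v
    constructor
    · rintro ⟨hvM, hvW⟩
      exact ⟨⟨v, hvW⟩, hvM, rfl⟩
    · rintro ⟨⟨v, hvW⟩, hvM, rfl⟩
      exact ⟨hvM, hvW⟩
  rw [himg, Set.ncard_image_of_injective _ Subtype.val_injective]
  rcases hprim.2 M' hmod with h | ⟨x, h⟩ | h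
  · simp [h]
  · simp [h]
  · exfalso
    apply hW
    intro v hv
    have : (⟨v, hv⟩ : W) ∈ M' := h ▸ Set.mem_univ _
    exact this
end

section
/- Let G be a finite simple graph and let H = G[W] be a primitive induced subgraph of G. Let M be a strong module of G that is inclusion-minimal with respect to containing W, i.e., W ⊆ M and no strong module M'' of G satisfies W ⊆ M'' ⊊ M. Then M is a prime module of G: |M| > 1, the induced subgraph G[M] is connected, and the complement of G[M] is connected. -/
/-- A module `M` of `G` is strong if it overlaps no other module of `G`. -/
def IsStrongModule {V : Type} (G : SimpleGraph V) (M : Set V) : Prop :=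
  IsModule G M ∧
    ∀ M' : Set V, IsModule G M' → M ∩ M' = ∅ ∨ M ∩ M' = M ∨ M ∩ M' = M'

open SimpleGraph

lemma isModule_compl {V : Type} (G : SimpleGraph V) (X : Set V)
    (h : IsModule G X) : IsModule Gᶜ X := by
  intro z hz
  rcases h z hz with h' | h'
  · right
    intro x hx hadj
    exact hadj.2 (h' x hx)
  · left
    intro x hx
    refine ⟨?_, h' x hx⟩
    rintro rfl
    exact hz hx

lemma isModule_compl_iff {V : Type} (G : SimpleGraph V) (X : Set V) :
    IsModule Gᶜ X ↔ IsModule G X := by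
  constructor
  · intro h
    have := isModule_compl Gᶜ X h
    simpa using this
  · exact isModule_compl G X

lemma isStrongModule_compl_iff {V : Type} (G : SimpleGraph V) (X : Set V) :
    IsStrongModule Gᶜ X ↔ IsStrongModule G X := by
  unfold IsStrongModule
  constructor
  · rintro ⟨h1, h2⟩
    exact ⟨(isModule_compl_iff G X).mp h1,
      fun M' hM' => h2 M' (isModule_compl G M' hM')⟩
  · rintro ⟨h1, h2⟩
    exact ⟨isModule_compl G X h1,
      fun M' hM' => h2 M' ((isModule_compl_iff G M').mp hM')⟩

lemma isPrimitive_compl {V : Type} (G : SimpleGraph V)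
    (h : IsPrimitive G) : IsPrimitive Gᶜ :=
  ⟨h.1, fun M hM => h.2 M ((isModule_compl_iff G M).mp hM)⟩

lemma induce_compl_eq {V : Type} (G : SimpleGraph V) (s : Set V) :
    Gᶜ.induce s = (G.induce s)ᶜ := by
  ext a b
  simp [Subtype.ext_iff]

lemma IsPrimitive.connected {α : Type} {H : SimpleGraph α}
    (h : IsPrimitive H) : H.Connected := by
  obtain ⟨hcard, hmod⟩ := h
  have hfin : Finite α := by
    by_contra hinf
    rw [not_finite_iff_infinite] at hinf
    simp [Nat.card_eq_zero_of_infinite] at hcard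
  have hne : Nonempty α := by
    have h0 : 0 < Nat.card α := by omega
    exact (Nat.card_pos_iff.mp h0).1
  rw [connected_iff]
  refine ⟨?_, hne⟩
  by_contra hpre
  rw [Preconnected] at hpre
  push_neg at hpre
  obtain ⟨u, v, huv⟩ := hpre
  have hcomp : ∀ x : α, IsModule H {y | H.Reachable x y} := by
    intro x z hz
    right
    intro y hy hadj
    exact hz (hy.trans hadj.symm.reachable)
  have hsing : ∀ x : α, {y | H.Reachable x y} = {x} := by
    intro x
    rcases hmod _ (hcomp x) with h0 | ⟨w, hw⟩ | huniv
    · exact absurd (h0 ▸ (Set.mem_setOf.mpr (Reachable.refl x))) (Set.notMem_empty x)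
    · have hx : x ∈ ({w} : Set α) := hw ▸ (Set.mem_setOf.mpr (Reachable.refl x))
      rw [Set.mem_singleton_iff] at hx
      rw [hw, hx]
    · have h1 : H.Reachable x u := by
        have : u ∈ {y | H.Reachable x y} := huniv ▸ Set.mem_univ u
        exact this
      have h2 : H.Reachable x v := by
        have : v ∈ {y | H.Reachable x y} := huniv ▸ Set.mem_univ v
        exact this
      exact absurd (h1.symm.trans h2) huv
  have hedgeless : ∀ y z : α, ¬ H.Adj y z := by
    intro y z hadj
    have hz : z ∈ {t | H.Reachable y t} := hadj.reachable
    rw [hsing y, Set.mem_singleton_iff] at hz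
    exact H.loopless.irrefl y (hz ▸ hadj)
  have huvne : u ≠ v := by
    rintro rfl
    exact huv (Reachable.refl u)
  have hmodUV : IsModule H {u, v} := by
    intro z _
    right
    intro x _
    exact hedgeless z x
  rcases hmod _ hmodUV with h0 | ⟨w, hw⟩ | huniv
  · have : u ∈ ({u, v} : Set α) := by simp
    rw [h0] at this
    exact Set.notMem_empty u this
  · have hu : u ∈ ({w} : Set α) := hw ▸ (by simp : u ∈ ({u, v} : Set α))
    have hv : v ∈ ({w} : Set α) := hw ▸ (by simp : v ∈ ({u, v} : Set α))
    rw [Set.mem_singleton_iff] at hu hv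
    exact huvne (hu.trans hv.symm)
  · have hle : ({u, v} : Set α).ncard ≤ 2 := by
      calc ({u, v} : Set α).ncard ≤ ({v} : Set α).ncard + 1 :=
            Set.ncard_insert_le u {v}
        _ ≤ 2 := by simp [Set.ncard_singleton]
    rw [huniv, Set.ncard_univ] at hle
    omega

lemma walk_cross {β : Type} {H : SimpleGraph β} (Y : Set β) :
    ∀ {a c : β} (_ : H.Walk a c), a ∈ Y → c ∉ Y →
      ∃ u v, H.Adj u v ∧ u ∈ Y ∧ v ∉ Y ∧ H.Reachable a u := by
  intro a c p
  induction p with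
  | nil => intro ha hc; exact absurd ha hc
  | @cons x y z h q ih =>
    intro ha hc
    by_cases hb : y ∈ Y
    · obtain ⟨u, v, h1, h2, h3, h4⟩ := ih hb hc
      exact ⟨u, v, h1, h2, h3, h.reachable.trans h4⟩
    · exact ⟨x, y, h, ha, hb, Reachable.refl x⟩

lemma connected_of_minimal {V : Type} [Fintype V]
    (G : SimpleGraph V) (W : Set V) (hprim : IsPrimitive (G.induce W))
    (M : Set V) (hM : IsStrongModule G M) (hWM : W ⊆ M)
    (hmin : ∀ M'' : Set V, IsStrongModule G M'' → W ⊆ M'' → ¬ M'' ⊂ M) :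
    (G.induce M).Connected := by
  have hWconn : (G.induce W).Connected := hprim.connected
  obtain ⟨w₀, hw₀⟩ : ∃ w, w ∈ W := by
    have : Nonempty ↥W := hWconn.nonempty
    obtain ⟨⟨w, hw⟩⟩ := this
    exact ⟨w, hw⟩
  have hw₀M : w₀ ∈ M := hWM hw₀
  by_contra hconn
  set S : Set V := {x : V | ∃ hx : x ∈ M, (G.induce M).Reachable ⟨w₀, hw₀M⟩ ⟨x, hx⟩} with hSdef
  have hSM : S ⊆ M := fun x hx => hx.1
  have hreachWM : ∀ (a b : ↥W), (G.induce W).Reachable a b →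
      (G.induce M).Reachable ⟨a.1, hWM a.2⟩ ⟨b.1, hWM b.2⟩ := by
    intro a b hr
    let f : G.induce W →g G.induce M :=
      ⟨fun x => ⟨x.1, hWM x.2⟩, fun h => h⟩
    exact hr.map f
  have hWS : W ⊆ S := by
    intro w hw
    exact ⟨hWM hw, hreachWM ⟨w₀, hw₀⟩ ⟨w, hw⟩ (hWconn.preconnected _ _)⟩
  -- membership in S via reachability, stated conveniently
  have hmemS : ∀ (y : ↥M), (G.induce M).Reachable ⟨w₀, hw₀M⟩ y → y.1 ∈ S := by
    intro y hy
    exact ⟨y.2, by convert hy⟩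
  have hreachS : ∀ (x : V) (hx : x ∈ S), (G.induce M).Reachable ⟨w₀, hw₀M⟩ ⟨x, hSM hx⟩ := by
    intro x hx
    obtain ⟨hxM, hr⟩ := hx
    convert hr
  -- some vertex of M not in S
  have hMnotS : ∃ m ∈ M, m ∉ S := by
    have hMne : Nonempty ↥M := ⟨⟨w₀, hw₀M⟩⟩
    have hpre : ¬ (G.induce M).Preconnected := fun hp => hconn (Connected.mk hp)
    rw [Preconnected] at hpre
    push_neg at hpre
    obtain ⟨y, z, hyz⟩ := hpre
    by_cases hy : y.1 ∈ S
    · refine ⟨z.1, z.2, fun hz => ?_⟩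
      have h1 := hreachS y.1 hy
      have h2 := hreachS z.1 hz
      have : (G.induce M).Reachable y z := by
        have := h1.symm.trans h2
        convert this
      exact hyz this
    · exact ⟨y.1, y.2, hy⟩
  obtain ⟨m, hmM, hmS⟩ := hMnotS
  -- S is a module of G
  have hSmod : IsModule G S := by
    intro z hz
    by_cases hzM : z ∈ M
    · right
      intro x hx hadj
      have hadjM : (G.induce M).Adj ⟨x, hSM hx⟩ ⟨z, hzM⟩ := hadj.symm
      have : z ∈ S := hmemS ⟨z, hzM⟩ ((hreachS x hx).trans hadjM.reachable)
      exact hz this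
    · rcases hM.1 z hzM with h' | h'
      · exact Or.inl fun x hx => h' x (hSM hx)
      · exact Or.inr fun x hx => h' x (hSM hx)
  -- S is a strong module of G
  have hSstrong : IsStrongModule G S := by
    refine ⟨hSmod, ?_⟩
    intro X hX
    by_contra hcon
    push_neg at hcon
    obtain ⟨h1, h2, h3⟩ := hcon
    -- get a ∈ S ∩ X
    obtain ⟨a, haS, haX⟩ : ∃ a, a ∈ S ∧ a ∈ X := by
      obtain ⟨a, ha⟩ := h1
      exact ⟨a, ha.1, ha.2⟩
    -- get c ∈ S \ X
    obtain ⟨c, hcS, hcX⟩ : ∃ c, c ∈ S ∧ c ∉ X := by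
      by_contra hno
      push_neg at hno
      exact h2 (Set.inter_eq_self_of_subset_left hno)
    -- get b ∈ X \ S
    obtain ⟨b, hbX, hbS⟩ : ∃ b, b ∈ X ∧ b ∉ S := by
      by_contra hno
      push_neg at hno
      exact h3 (Set.inter_eq_self_of_subset_right hno)
    -- M strong applied to X
    rcases hM.2 X hX with hc1 | hc2 | hc3
    · have : a ∈ M ∩ X := ⟨hSM haS, haX⟩
      rw [hc1] at this
      exact Set.notMem_empty a this
    · -- M ⊆ X
      have hMX : M ⊆ X := by
        intro t ht
        have h' : t ∈ M ∩ X := by rw [hc2]; exact ht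
        exact h'.2
      exact hcX (hMX (hSM hcS))
    · -- X ⊆ M
      have hXM : X ⊆ M := by
        intro t ht
        have h' : t ∈ M ∩ X := by rw [hc3]; exact ht
        exact h'.1
      -- walk from a to c in G.induce M, both in S
      have hra := hreachS a haS
      have hrc := hreachS c hcS
      obtain ⟨p⟩ := (hra.symm.trans hrc)
      obtain ⟨u, v, hadj, huX, hvX, hru⟩ :=
        walk_cross {t : ↥M | t.1 ∈ X} p haX hcX
      -- v.1 ∈ S
      have hvS : v.1 ∈ S := hmemS v (hra.trans (hru.trans hadj.reachable))
      -- v.1 ∉ X, adjacent to u.1 ∈ X, so adjacent to all of X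
      have hvXall : ∀ x ∈ X, G.Adj v.1 x := by
        rcases hX v.1 hvX with h' | h'
        · exact h'
        · exact absurd (hadj.symm : G.Adj v.1 u.1) (h' u.1 huX)
      -- then v adjacent to b, so b ∈ S, contradiction
      have hadjvb : G.Adj v.1 b := hvXall b hbX
      have : (G.induce M).Adj v ⟨b, hXM hbX⟩ := hadjvb
      exact hbS (hmemS ⟨b, hXM hbX⟩ ((hra.trans (hru.trans hadj.reachable)).trans this.reachable))
  -- contradiction with minimality
  have hssub : S ⊂ M := ⟨hSM, fun hMS => hmS (hMS hmM)⟩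
  exact hmin S hSstrong hWS hssub

/-- If `G[W]` is a primitive induced subgraph of `G` and `M` is a strong module
of `G` that is inclusion-minimal with respect to containing `W`, then `M` is a
prime module of `G`: `|M| > 1` and both `G[M]` and its complement are
connected. -/
theorem minimal_strongModule_containing_primitive_is_prime {V : Type} [Fintype V]
    (G : SimpleGraph V) (W : Set V) (hprim : IsPrimitive (G.induce W))
    (M : Set V) (hM : IsStrongModule G M) (hWM : W ⊆ M)
    (hmin : ∀ M'' : Set V, IsStrongModule G M'' → W ⊆ M'' → ¬ M'' ⊂ M) :
    1 < M.ncard ∧ (G.induce M).Connected ∧ ((G.induce M)ᶜ).Connected := by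
  refine ⟨?_, connected_of_minimal G W hprim M hM hWM hmin, ?_⟩
  · have h4 : 4 ≤ Nat.card ↥W := hprim.1
    have hW : Nat.card ↥W = W.ncard := Nat.card_coe_set_eq W
    have hle : W.ncard ≤ M.ncard := Set.ncard_le_ncard hWM M.toFinite
    omega
  · have hprim' : IsPrimitive (Gᶜ.induce W) := by
      rw [induce_compl_eq]
      exact isPrimitive_compl _ hprim
    have hM' : IsStrongModule Gᶜ M := (isStrongModule_compl_iff G M).mpr hM
    have hmin' : ∀ M'' : Set V, IsStrongModule Gᶜ M'' → W ⊆ M'' → ¬ M'' ⊂ M :=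
      fun M'' hs hw => hmin M'' ((isStrongModule_compl_iff G M'').mp hs) hw
    have := connected_of_minimal Gᶜ W hprim' M hM' hWM hmin'
    rwa [induce_compl_eq] at this
end

section
/- A finite simple graph G with a nonempty vertex set is a cograph if and only if G contains no induced subgraph isomorphic to the path P₄ on four vertices. -/
/-- The join of two vertex-disjoint graphs: their disjoint union together with
all edges between the two vertex sets. -/
def graphJoin {α β : Type} (G : SimpleGraph α) (H : SimpleGraph β) :
    SimpleGraph (α ⊕ β) where
  Adj u v := match u, v with
    | Sum.inl u, Sum.inl v => G.Adj u v
    | Sum.inr u, Sum.inr v => H.Adj u v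
    | _, _ => True
  symm := ⟨by
    rintro (u | u) (v | v) h
    · exact h.symm
    · trivial
    · trivial
    · exact h.symm⟩
  loopless := ⟨by
    rintro (u | u) h
    · exact G.irrefl h
    · exact H.irrefl h⟩

/-- The class of cographs: the smallest class of (finite) simple graphs,
closed under isomorphism, containing the one-vertex graph `K₁` and closed
under disjoint unions and joins of vertex-disjoint members. -/
inductive IsCograph : {V : Type} → SimpleGraph V → Prop
  | k1 : IsCograph (⊤ : SimpleGraph (Fin 1))
  | disjUnion {α β : Type} {G : SimpleGraph α} {H : SimpleGraph β} :
      IsCograph G → IsCograph H → IsCograph (G ⊕g H)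
  | join {α β : Type} {G : SimpleGraph α} {H : SimpleGraph β} :
      IsCograph G → IsCograph H → IsCograph (graphJoin G H)
  | iso {α β : Type} {G : SimpleGraph α} {H : SimpleGraph β} :
      IsCograph G → (G ≃g H) → IsCograph H


open SimpleGraph

lemma mkP4 {V : Type} {G : SimpleGraph V} {a b c d : V}
    (hab : G.Adj a b) (hbc : G.Adj b c) (hcd : G.Adj c d)
    (hac : ¬ G.Adj a c) (hbd : ¬ G.Adj b d) (had : ¬ G.Adj a d) :
    Nonempty (pathGraph 4 ↪g G) := by
  have hca : ¬ G.Adj c a := fun h => hac h.symm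
  have hdb : ¬ G.Adj d b := fun h => hbd h.symm
  have hda : ¬ G.Adj d a := fun h => had h.symm
  have hac' : a ≠ c := by rintro rfl; exact had hcd
  have hbd' : b ≠ d := fun h => had (h ▸ hab)
  have had' : a ≠ d := by rintro rfl; exact hca hcd
  have hba := hab.symm; have hcb := hbc.symm; have hdc := hcd.symm
  refine ⟨⟨⟨![a,b,c,d], ?_⟩, ?_⟩⟩
  · intro i j hij
    fin_cases i <;> fin_cases j <;>
      first
        | rfl
        | (exact absurd hij hab.ne) | (exact absurd hij hba.ne)
        | (exact absurd hij hbc.ne) | (exact absurd hij hcb.ne)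
        | (exact absurd hij hcd.ne) | (exact absurd hij hdc.ne)
        | (exact absurd hij hac') | (exact absurd hij hac'.symm)
        | (exact absurd hij hbd') | (exact absurd hij hbd'.symm)
        | (exact absurd hij had') | (exact absurd hij had'.symm)
  · intro i j
    fin_cases i <;> fin_cases j <;>
      simp [Function.Embedding.coeFn_mk, pathGraph_adj, hab, hbc, hcd, hac, hbd, had, hba, hcb, hdc, hca, hdb, hda,
        G.irrefl] <;> first | decide | assumption


variable {V : Type} {G : SimpleGraph V}

lemma induce_adj' {s : Set V} {u v : s} (h : G.Adj ↑u ↑v) : (G.induce s).Adj u v := h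

/-- From a walk to `x`, find an attachment point of the start's component in `G - x`. -/
lemma walk_attach {x : V} :
    ∀ {w : V} (_ : G.Walk w x) (hw : w ∈ {v : V | v ≠ x}),
    ∃ u : {v : V | v ≠ x},
      (G.induce {v : V | v ≠ x}).Reachable ⟨w, hw⟩ u ∧ G.Adj x ↑u := by
  intro w p
  induction p with
  | nil => exact fun hw => absurd rfl hw
  | @cons w y x h q ih =>
    intro hw
    by_cases hy : y = x
    · subst hy
      exact ⟨⟨w, hw⟩, Reachable.refl _, h.symm⟩
    · obtain ⟨u, hru, hadj⟩ := ih hy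
      exact ⟨u, (induce_adj' h : (G.induce _).Adj ⟨w, hw⟩ ⟨y, hy⟩).reachable.trans hru, hadj⟩

/-- Along a walk from a non-neighbor of `x` to a neighbor of `x` (inside `G - x`),
there is an edge from a non-neighbor to a neighbor. -/
lemma exists_frontier {x : V} :
    ∀ {z u : {v : V | v ≠ x}} (_ : (G.induce {v : V | v ≠ x}).Walk z u),
    ¬ G.Adj x ↑z → G.Adj x ↑u →
    ∃ p q : {v : V | v ≠ x}, (G.induce {v : V | v ≠ x}).Adj p q ∧ ¬ G.Adj x ↑p ∧ G.Adj x ↑q ∧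
      (G.induce {v : V | v ≠ x}).Reachable z p := by
  intro z u p
  induction p with
  | nil => exact fun hz hu => absurd hu hz
  | @cons z y u h q ih =>
    intro hz hu
    by_cases hy : G.Adj x ↑y
    · exact ⟨z, y, h, hz, hy, Reachable.refl _⟩
    · obtain ⟨p', q', hpq, hp, hq, hr⟩ := ih hy hu
      exact ⟨p', q', hpq, hp, hq, h.reachable.trans hr⟩

lemma exists_adj_of_connected [Fintype V] (h : G.Connected) (h2 : 2 ≤ Fintype.card V)
    (x : V) : ∃ z, G.Adj x z := by
  obtain ⟨y, hy⟩ := Fintype.exists_ne_of_one_lt_card (by omega) x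
  obtain ⟨p⟩ := h.preconnected x y
  cases p with
  | nil => exact absurd rfl hy.symm
  | cons h _ => exact ⟨_, h⟩

lemma seinsche_step [Fintype V] (hfree : ¬ Nonempty (pathGraph 4 ↪g G))
    (hG : G.Connected) (hGc : Gᶜ.Connected) (h2 : 2 ≤ Fintype.card V) (x : V)
    (hdis : ¬ (G.induce {v : V | v ≠ x}).Preconnected) : False := by
  set s : Set V := {v : V | v ≠ x} with hs
  rw [Preconnected] at hdis
  push_neg at hdis
  obtain ⟨a, b, hab⟩ := hdis
  -- a non-neighbor z of x
  obtain ⟨z, hz⟩ := exists_adj_of_connected hGc h2 x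
  rw [compl_adj _ _ _] at hz
  obtain ⟨hzx, hznadj⟩ := hz
  have hzs : z ∈ s := fun h => hzx h.symm
  set z' : s := ⟨z, hzs⟩
  -- one of a, b is unreachable from z'
  have hc : ∃ c : s, ¬ (G.induce s).Reachable z' c := by
    by_contra hcon
    push_neg at hcon
    exact hab ((hcon a).symm.trans (hcon b))
  obtain ⟨c, hc⟩ := hc
  -- attach point of c's component
  obtain ⟨pc⟩ := hG.preconnected ↑c x
  obtain ⟨d, hrd, hd⟩ := walk_attach pc c.2
  -- attach point of z's component
  obtain ⟨pz⟩ := hG.preconnected z x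
  obtain ⟨u, hru, hu⟩ := walk_attach pz hzs
  obtain ⟨wzu⟩ := hru
  obtain ⟨p, q, hpq, hp, hq, hrp⟩ := exists_frontier wzu hznadj hu
  -- q is reachable from z'
  have hrq : (G.induce s).Reachable z' q := hrp.trans hpq.reachable
  -- p, q cannot be adjacent (or equal) to anything in c's component
  have key : ∀ w : s, (G.induce s).Reachable z' w → ¬ G.Adj ↑w ↑d := by
    intro w hw hadj
    have : (G.induce s).Reachable z' d := hw.trans (induce_adj' hadj).reachable
    exact hc (this.trans hrd.symm)
  refine hfree (mkP4 (a := ↑p) (b := ↑q) (c := x) (d := ↑d) hpq ?_ hd ?_ ?_ ?_)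
  · exact hq.symm
  · exact fun h => hp h.symm
  · exact key q hrq
  · exact key p hrp


/-- `P₄` is isomorphic to its complement. -/
noncomputable def p4SelfCompl : pathGraph 4 ≃g (pathGraph 4)ᶜ := by
  refine ⟨⟨![1,3,0,2], ![2,0,3,1], by decide, by decide⟩, ?_⟩
  intro a b
  fin_cases a <;> fin_cases b <;>
    simp [compl_adj, pathGraph_adj] <;> decide

lemma p4_emb_of_compl {V : Type} {G : SimpleGraph V} (f : pathGraph 4 ↪g Gᶜ) :
    Nonempty (pathGraph 4 ↪g G) := by
  have f' : (pathGraph 4)ᶜ ↪g G := by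
    refine ⟨f.toEmbedding, ?_⟩
    intro a b
    constructor
    · intro h
      refine ⟨fun hab => (h.ne (congrArg f hab)), fun hadj => ?_⟩
      have h2 := f.map_adj_iff.mpr hadj
      rw [compl_adj _ _ _] at h2
      exact h2.2 h
    · rintro ⟨hne, hnadj⟩
      have hfne : f a ≠ f b := fun h => hne (f.injective h)
      by_contra hG
      exact hnadj (f.map_adj_iff.mp ((compl_adj _ _ _).mpr ⟨hfne, hG⟩))
  exact ⟨f'.comp p4SelfCompl.toEmbedding⟩


variable {V : Type}

lemma compl_induce (G : SimpleGraph V) (s : Set V) :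
    (G.induce s)ᶜ = Gᶜ.induce s := by
  ext u v
  show (u ≠ v ∧ ¬ G.Adj ↑u ↑v) ↔ ((↑u : V) ≠ ↑v ∧ ¬ G.Adj ↑u ↑v)
  constructor
  · rintro ⟨h1, h2⟩
    exact ⟨fun h => h1 (Subtype.ext h), h2⟩
  · rintro ⟨h1, h2⟩
    exact ⟨fun h => h1 (congrArg Subtype.val h), h2⟩

lemma card_ne_x [Fintype V] (x : V) [Fintype ↥{v : V | v ≠ x}] :
    Fintype.card ↥{v : V | v ≠ x} = Fintype.card V - 1 := by
  classical
  have e : ↥{v : V | v ≠ x} ≃ {v : V // ¬ v = x} := Equiv.subtypeEquivRight (fun v => Iff.rfl)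
  rw [Fintype.card_congr e, Fintype.card_subtype_compl, Fintype.card_subtype_eq]


lemma key (n : ℕ) : ∀ (V : Type) [Fintype V] (G : SimpleGraph V),
    Fintype.card V = n → ¬ Nonempty (pathGraph 4 ↪g G) →
    G.Connected → Gᶜ.Connected → Fintype.card V ≤ 1 := by
  induction n using Nat.strong_induction_on with
  | _ n ih =>
  intro V _ G hn hfree hG hGc
  by_contra hcard
  push_neg at hcard
  by_cases h3 : 3 ≤ Fintype.card V
  · classical
    obtain ⟨x⟩ := hG.nonempty
    set s : Set V := {v : V | v ≠ x} with hs
    have hcards : Fintype.card ↥s = n - 1 := by rw [card_ne_x x]; omega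
    haveI hnes : Nonempty ↥s := by
      rw [← Fintype.card_pos_iff, hcards]; omega
    by_cases hA : (G.induce s).Preconnected
    · by_cases hB : ((G.induce s)ᶜ).Preconnected
      · have hfree' : ¬ Nonempty (pathGraph 4 ↪g G.induce s) :=
          fun ⟨f⟩ => hfree ⟨(Embedding.induce s).comp f⟩
        have := ih (n - 1) (by omega) ↥s (G.induce s) hcards hfree' ⟨hA⟩ ⟨hB⟩
        omega
      · have hfreec : ¬ Nonempty (pathGraph 4 ↪g Gᶜ) := fun ⟨f⟩ => hfree (p4_emb_of_compl f)
        refine seinsche_step hfreec hGc (by rwa [compl_compl]) (by omega) x ?_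
        rw [← compl_induce]
        exact hB
    · exact seinsche_step hfree hG hGc (by omega) x hA
  · -- Fintype.card V = 2
    classical
    have h2 : Fintype.card V = 2 := by omega
    obtain ⟨x⟩ : Nonempty V := hG.nonempty
    obtain ⟨z, hz⟩ := exists_adj_of_connected hG (by omega) x
    obtain ⟨z', hz'⟩ := exists_adj_of_connected hGc (by omega) x
    rw [compl_adj _ _ _] at hz'
    have hsub : Fintype.card {v : V | v ≠ x} ≤ 1 := by rw [card_ne_x x]; omega
    have : (⟨z, hz.ne'⟩ : {v : V | v ≠ x}) = ⟨z', fun h => hz'.1 h.symm⟩ :=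
      Fintype.card_le_one_iff.mp hsub _ _
    have hzz : z = z' := congrArg Subtype.val this
    exact hz'.2 (hzz ▸ hz)


lemma p4adj01 : (pathGraph 4).Adj 0 1 := by rw [pathGraph_adj]; decide
lemma p4adj12 : (pathGraph 4).Adj 1 2 := by rw [pathGraph_adj]; decide
lemma p4adj23 : (pathGraph 4).Adj 2 3 := by rw [pathGraph_adj]; decide
lemma p4nadj02 : ¬ (pathGraph 4).Adj 0 2 := by rw [pathGraph_adj]; decide
lemma p4nadj03 : ¬ (pathGraph 4).Adj 0 3 := by rw [pathGraph_adj]; decide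
lemma p4nadj13 : ¬ (pathGraph 4).Adj 1 3 := by rw [pathGraph_adj]; decide

section Fwd
variable {α β : Type} {G : SimpleGraph α} {H : SimpleGraph β}

lemma emb_sum_left (f : pathGraph 4 ↪g G ⊕g H) {a0 : α} (h0 : f 0 = Sum.inl a0) :
    Nonempty (pathGraph 4 ↪g G) := by
  have step : ∀ (i j : Fin 4) (a : α), (pathGraph 4).Adj i j → f i = Sum.inl a →
      ∃ b, f j = Sum.inl b := by
    intro i j a hij hfi
    have hadj := f.map_adj_iff.mpr hij
    rcases hj : f j with b | b
    · exact ⟨b, rfl⟩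
    · rw [hfi, hj] at hadj
      simp at hadj
  obtain ⟨a1, h1⟩ := step 0 1 a0 p4adj01 h0
  obtain ⟨a2, h2⟩ := step 1 2 a1 p4adj12 h1
  obtain ⟨a3, h3⟩ := step 2 3 a2 p4adj23 h2
  have hfi : ∀ i, f i = Sum.inl (![a0, a1, a2, a3] i) := by
    intro i; fin_cases i <;> simpa
  refine ⟨⟨⟨![a0, a1, a2, a3], ?_⟩, ?_⟩⟩
  · intro i j hij
    apply f.injective
    rw [hfi i, hfi j, hij]
  · intro i j
    rw [← f.map_adj_iff (v := i) (w := j), hfi i, hfi j]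
    simp
    rfl

lemma emb_join_left (f : pathGraph 4 ↪g graphJoin G H) {a0 : α} (h0 : f 0 = Sum.inl a0) :
    Nonempty (pathGraph 4 ↪g G) := by
  have step : ∀ (i j : Fin 4) (a : α), ¬ (pathGraph 4).Adj i j → f i = Sum.inl a →
      ∃ b, f j = Sum.inl b := by
    intro i j a hij hfi
    rcases hj : f j with b | b
    · exact ⟨b, rfl⟩
    · exfalso
      apply hij
      apply f.map_adj_iff.mp
      rw [hfi, hj]
      trivial
  obtain ⟨a2, h2⟩ := step 0 2 a0 p4nadj02 h0
  obtain ⟨a3, h3⟩ := step 0 3 a0 p4nadj03 h0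
  obtain ⟨a1, h1⟩ := step 3 1 a3 (fun h => p4nadj13 h.symm) h3
  have hfi : ∀ i, f i = Sum.inl (![a0, a1, a2, a3] i) := by
    intro i; fin_cases i <;> simpa
  refine ⟨⟨⟨![a0, a1, a2, a3], ?_⟩, ?_⟩⟩
  · intro i j hij
    apply f.injective
    rw [hfi i, hfi j, hij]
  · intro i j
    rw [← f.map_adj_iff (v := i) (w := j), hfi i, hfi j]
    rfl

def joinComm : graphJoin G H ≃g graphJoin H G :=
  ⟨Equiv.sumComm α β, by rintro (u | u) (v | v) <;> rfl⟩

end Fwd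

lemma forward {V : Type} {G : SimpleGraph V} (h : IsCograph G) :
    ¬ Nonempty (pathGraph 4 ↪g G) := by
  induction h with
  | k1 =>
    rintro ⟨f⟩
    exact (f.map_adj_iff.mpr p4adj01).ne (Subsingleton.elim _ _)
  | @disjUnion α β G H hG hH ihG ihH =>
    rintro ⟨f⟩
    rcases h0 : f 0 with a0 | b0
    · exact ihG (emb_sum_left f h0)
    · have h0' : (Iso.sumComm.toEmbedding.comp f) 0 = Sum.inl b0 := by
        simp [h0]
      exact ihH (emb_sum_left (Iso.sumComm.toEmbedding.comp f) h0')
  | @join α β G H hG hH ihG ihH =>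
    rintro ⟨f⟩
    rcases h0 : f 0 with a0 | b0
    · exact ihG (emb_join_left f h0)
    · have h0' : (joinComm.toEmbedding.comp f) 0 = Sum.inl b0 := by
        simp [joinComm, h0]
      exact ihH (emb_join_left (joinComm.toEmbedding.comp f) h0')
  | iso hG e ihG =>
    rintro ⟨f⟩
    exact ihG ⟨e.symm.toEmbedding.comp f⟩


lemma backward (n : ℕ) : ∀ (V : Type) [Fintype V] [Nonempty V] (G : SimpleGraph V),
    Fintype.card V ≤ n → ¬ Nonempty (pathGraph 4 ↪g G) → IsCograph G := by
  induction n with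
  | zero =>
    intro V _ _ G hc _
    have := Fintype.card_pos (α := V)
    omega
  | succ n ihn =>
    intro V _ _ G hc hfree
    classical
    by_cases h1 : Fintype.card V ≤ 1
    · haveI : Subsingleton V := Fintype.card_le_one_iff_subsingleton.mp h1
      have h1' : Fintype.card V = 1 := le_antisymm h1 Fintype.card_pos
      have e : V ≃ Fin 1 := Fintype.equivFinOfCardEq h1'
      have iso : (⊤ : SimpleGraph (Fin 1)) ≃g G := by
        refine ⟨e.symm, ?_⟩
        intro a b
        constructor
        · intro h; exact absurd (Subsingleton.elim _ _) h.ne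
        · intro h; exact absurd (Subsingleton.elim _ _) h.ne
      exact IsCograph.iso IsCograph.k1 iso
    · push_neg at h1
      have hdis : ¬ G.Connected ∨ ¬ Gᶜ.Connected := by
        by_contra hcon
        push_neg at hcon
        have := key (Fintype.card V) V G rfl hfree hcon.1 hcon.2
        omega
      rcases hdis with hd | hd
      · -- G disconnected: disjoint union decomposition
        have hpre : ¬ G.Preconnected := fun h => hd ⟨h⟩
        rw [Preconnected] at hpre
        push_neg at hpre
        obtain ⟨a, b, hab⟩ := hpre
        set p : V → Prop := fun w => G.Reachable a w with hp
        have haS : p a := Reachable.refl a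
        have hbS : ¬ p b := hab
        have hcross : ∀ u v : V, p u → ¬ p v → ¬ G.Adj u v :=
          fun u v hu hv hadj => hv (hu.trans hadj.reachable)
        have iso : (G.induce {w | p w} ⊕g G.induce {w | ¬ p w}) ≃g G := by
          refine ⟨Equiv.sumCompl p, ?_⟩
          rintro (u | u) (v | v)
          · exact Iff.rfl
          · constructor
            · intro h; exact absurd h (hcross _ _ u.2 v.2)
            · intro h; exact absurd h (by simp)
          · constructor
            · intro h; exact absurd h.symm (hcross _ _ v.2 u.2)
            · intro h; exact absurd h (by simp)
          · exact Iff.rfl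
        have c1 : Fintype.card {w | p w} < Fintype.card V := Fintype.card_subtype_lt hbS
        have c2 : Fintype.card {w | ¬ p w} < Fintype.card V :=
          Fintype.card_subtype_lt (p := fun w => ¬ p w) (x := a) (not_not_intro haS)
        haveI n1 : Nonempty ↥{w | p w} := ⟨⟨a, haS⟩⟩
        haveI n2 : Nonempty ↥{w | ¬ p w} := ⟨⟨b, hbS⟩⟩
        have f1 : ¬ Nonempty (pathGraph 4 ↪g G.induce {w | p w}) :=
          fun ⟨f⟩ => hfree ⟨(Embedding.induce _).comp f⟩
        have f2 : ¬ Nonempty (pathGraph 4 ↪g G.induce {w | ¬ p w}) :=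
          fun ⟨f⟩ => hfree ⟨(Embedding.induce _).comp f⟩
        exact IsCograph.iso
          (IsCograph.disjUnion (ihn _ _ (by omega) f1) (ihn _ _ (by omega) f2)) iso
      · -- complement disconnected: join decomposition
        have hpre : ¬ Gᶜ.Preconnected := fun h => hd ⟨h⟩
        rw [Preconnected] at hpre
        push_neg at hpre
        obtain ⟨a, b, hab⟩ := hpre
        set p : V → Prop := fun w => Gᶜ.Reachable a w with hp
        have haS : p a := Reachable.refl a
        have hbS : ¬ p b := hab
        have hcross : ∀ u v : V, p u → ¬ p v → G.Adj u v := by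
          intro u v hu hv
          have hne : u ≠ v := fun h => hv (h ▸ hu)
          by_contra hadj
          exact hv (hu.trans (Adj.reachable ((compl_adj _ _ _).mpr ⟨hne, hadj⟩)))
        have iso : (graphJoin (G.induce {w | p w}) (G.induce {w | ¬ p w})) ≃g G := by
          refine ⟨Equiv.sumCompl p, ?_⟩
          rintro (u | u) (v | v)
          · exact Iff.rfl
          · constructor
            · intro _; trivial
            · intro _; exact hcross _ _ u.2 v.2
          · constructor
            · intro _; trivial
            · intro _; exact (hcross _ _ v.2 u.2).symm
          · exact Iff.rfl
        have c1 : Fintype.card {w | p w} < Fintype.card V := Fintype.card_subtype_lt hbS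
        have c2 : Fintype.card {w | ¬ p w} < Fintype.card V :=
          Fintype.card_subtype_lt (p := fun w => ¬ p w) (x := a) (not_not_intro haS)
        haveI n1 : Nonempty ↥{w | p w} := ⟨⟨a, haS⟩⟩
        haveI n2 : Nonempty ↥{w | ¬ p w} := ⟨⟨b, hbS⟩⟩
        have f1 : ¬ Nonempty (pathGraph 4 ↪g G.induce {w | p w}) :=
          fun ⟨f⟩ => hfree ⟨(Embedding.induce _).comp f⟩
        have f2 : ¬ Nonempty (pathGraph 4 ↪g G.induce {w | ¬ p w}) :=
          fun ⟨f⟩ => hfree ⟨(Embedding.induce _).comp f⟩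
        exact IsCograph.iso
          (IsCograph.join (ihn _ _ (by omega) f1) (ihn _ _ (by omega) f2)) iso

/-- A finite simple graph with a nonempty vertex set is a cograph if and only
if it contains no induced subgraph isomorphic to the path `P₄` on four
vertices. -/
theorem isCograph_iff_p4_free {V : Type} [Fintype V] [Nonempty V]
    (G : SimpleGraph V) :
    IsCograph G ↔ ¬ Nonempty (SimpleGraph.pathGraph 4 ↪g G) := by
  constructor
  · exact forward
  · exact backward (Fintype.card V) V G le_rfl
end

section
/- Every induced subgraph (on a nonempty vertex set) of a pseudo-cograph is a pseudo-cograph. -/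
/-- A graph is P₄-free (i.e., a cograph) if it has no induced subgraph
isomorphic to the path on four vertices. -/
def IsP4Free {V : Type} (G : SimpleGraph V) : Prop :=
  ¬ Nonempty (SimpleGraph.pathGraph 4 ↪g G)

def HasP4On {V : Type} (G : SimpleGraph V) (s : Set V) : Prop :=
  ∃ a b c d : V, a ∈ s ∧ b ∈ s ∧ c ∈ s ∧ d ∈ s ∧
    G.Adj a b ∧ G.Adj b c ∧ G.Adj c d ∧ ¬ G.Adj a c ∧ ¬ G.Adj a d ∧ ¬ G.Adj b d

def GoodSplit {V : Type} (G : SimpleGraph V) (s : Set V) : Prop :=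
  ∃ A B : Set V, A ∪ B = s ∧ A ∩ B = ∅ ∧ A.Nonempty ∧ B.Nonempty ∧
    ((∀ x ∈ A, ∀ y ∈ B, G.Adj x y) ∨ (∀ x ∈ A, ∀ y ∈ B, ¬ G.Adj x y))

theorem adj_induce_iff {V : Type} (G : SimpleGraph V) (W : Set V) (a b : W) :
    (G.induce W).Adj a b ↔ G.Adj a.1 b.1 := by
  simp [SimpleGraph.comap_adj]

theorem hasP4On_induce_iff {V : Type} (G : SimpleGraph V) (W : Set V) (t : Set ↥W) :
    HasP4On (G.induce W) t ↔ HasP4On G (Subtype.val '' t) := by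
  constructor
  · rintro ⟨a, b, c, d, ha, hb, hc, hd, h1, h2, h3, h4, h5, h6⟩
    rw [adj_induce_iff] at h1 h2 h3 h4 h5 h6
    exact ⟨a.1, b.1, c.1, d.1, ⟨a, ha, rfl⟩, ⟨b, hb, rfl⟩, ⟨c, hc, rfl⟩, ⟨d, hd, rfl⟩,
      h1, h2, h3, h4, h5, h6⟩
  · rintro ⟨_, _, _, _, ⟨a, ha, rfl⟩, ⟨b, hb, rfl⟩, ⟨c, hc, rfl⟩, ⟨d, hd, rfl⟩,
      h1, h2, h3, h4, h5, h6⟩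
    refine ⟨a, b, c, d, ha, hb, hc, hd, ?_, ?_, ?_, ?_, ?_, ?_⟩ <;>
      rw [adj_induce_iff] <;> assumption
theorem isP4Free_induce_iff {V : Type} (G : SimpleGraph V) (s : Set V) :
    IsP4Free (G.induce s) ↔ ¬ HasP4On G s := by
  constructor
  · intro h hp
    obtain ⟨a, b, c, d, ha, hb, hc, hd, h1, h2, h3, h4, h5, h6⟩ := hp
    have n2 : a ≠ c := by rintro rfl; exact h5 h3
    have n3 : a ≠ d := by rintro rfl; exact h4 h3.symm
    have n5 : b ≠ d := by rintro rfl; exact h5 h1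
    apply h
    refine ⟨⟨⟨![⟨a, ha⟩, ⟨b, hb⟩, ⟨c, hc⟩, ⟨d, hd⟩], ?_⟩, ?_⟩⟩
    · intro i j hij
      fin_cases i <;> fin_cases j <;> simp_all [Subtype.ext_iff] <;>
        first
          | rfl
          | exact h1.ne (by assumption)
          | exact h1.ne (Eq.symm (by assumption))
          | exact h2.ne (by assumption)
          | exact h2.ne (Eq.symm (by assumption))
          | exact h3.ne (by assumption)
          | exact h3.ne (Eq.symm (by assumption))
          | exact n2 (by assumption)
          | exact n2 (Eq.symm (by assumption))
          | exact n3 (by assumption)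
          | exact n3 (Eq.symm (by assumption))
          | exact n5 (by assumption)
          | exact n5 (Eq.symm (by assumption))
    · intro i j
      fin_cases i <;> fin_cases j <;>
        first
          | exact iff_of_false (fun h' => h'.ne rfl)
              (by rw [SimpleGraph.pathGraph_adj]; decide)
          | exact iff_of_true h1 (by rw [SimpleGraph.pathGraph_adj]; decide)
          | exact iff_of_true h1.symm (by rw [SimpleGraph.pathGraph_adj]; decide)
          | exact iff_of_true h2 (by rw [SimpleGraph.pathGraph_adj]; decide)
          | exact iff_of_true h2.symm (by rw [SimpleGraph.pathGraph_adj]; decide)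
          | exact iff_of_true h3 (by rw [SimpleGraph.pathGraph_adj]; decide)
          | exact iff_of_true h3.symm (by rw [SimpleGraph.pathGraph_adj]; decide)
          | exact iff_of_false h4 (by rw [SimpleGraph.pathGraph_adj]; decide)
          | exact iff_of_false (fun h' => h4 h'.symm)
              (by rw [SimpleGraph.pathGraph_adj]; decide)
          | exact iff_of_false h5 (by rw [SimpleGraph.pathGraph_adj]; decide)
          | exact iff_of_false (fun h' => h5 h'.symm)
              (by rw [SimpleGraph.pathGraph_adj]; decide)
          | exact iff_of_false h6 (by rw [SimpleGraph.pathGraph_adj]; decide)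
          | exact iff_of_false (fun h' => h6 h'.symm)
              (by rw [SimpleGraph.pathGraph_adj]; decide)
  · intro h ⟨f⟩
    refine h ⟨(f 0).1, (f 1).1, (f 2).1, (f 3).1, (f 0).2, (f 1).2, (f 2).2, (f 3).2,
      f.map_rel_iff.mpr (by rw [SimpleGraph.pathGraph_adj]; decide),
      f.map_rel_iff.mpr (by rw [SimpleGraph.pathGraph_adj]; decide),
      f.map_rel_iff.mpr (by rw [SimpleGraph.pathGraph_adj]; decide),
      fun h' => (by rw [SimpleGraph.pathGraph_adj]; decide :
        ¬ (SimpleGraph.pathGraph 4).Adj 0 2) (f.map_rel_iff.mp h'),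
      fun h' => (by rw [SimpleGraph.pathGraph_adj]; decide :
        ¬ (SimpleGraph.pathGraph 4).Adj 0 3) (f.map_rel_iff.mp h'),
      fun h' => (by rw [SimpleGraph.pathGraph_adj]; decide :
        ¬ (SimpleGraph.pathGraph 4).Adj 1 3) (f.map_rel_iff.mp h')⟩
theorem HasP4On.mono {V : Type} {G : SimpleGraph V} {s t : Set V} (hst : s ⊆ t)
    (h : HasP4On G s) : HasP4On G t := by
  obtain ⟨a, b, c, d, ha, hb, hc, hd, hr⟩ := h
  exact ⟨a, b, c, d, hst ha, hst hb, hst hc, hst hd, hr⟩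

theorem not_hasP4On_insert {V : Type} {G : SimpleGraph V} {t : Set V} {w : V}
    (hdom : (∀ y ∈ t, G.Adj w y) ∨ (∀ y ∈ t, ¬ G.Adj w y))
    (ht : ¬ HasP4On G t) : ¬ HasP4On G (insert w t) := by
  rintro ⟨a, b, c, d, ha, hb, hc, hd, h1, h2, h3, h4, h5, h6⟩
  have n1 : a ≠ b := h1.ne
  have n4 : b ≠ c := h2.ne
  have n6 : c ≠ d := h3.ne
  have n2 : a ≠ c := by rintro rfl; exact h5 h3
  have n3 : a ≠ d := by rintro rfl; exact h4 h3.symm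
  have n5 : b ≠ d := by rintro rfl; exact h5 h1
  rcases Set.mem_insert_iff.mp ha with rfl | ha'
  · have hb' : b ∈ t := (Set.mem_insert_iff.mp hb).resolve_left (fun h => n1 h.symm)
    have hc' : c ∈ t := (Set.mem_insert_iff.mp hc).resolve_left (fun h => n2 h.symm)
    rcases hdom with hall | hnone
    · exact h4 (hall c hc')
    · exact hnone b hb' h1
  rcases Set.mem_insert_iff.mp hb with rfl | hb'
  · have hc' : c ∈ t := (Set.mem_insert_iff.mp hc).resolve_left (fun h => n4 h.symm)
    have hd' : d ∈ t := (Set.mem_insert_iff.mp hd).resolve_left (fun h => n5 h.symm)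
    rcases hdom with hall | hnone
    · exact h6 (hall d hd')
    · exact hnone c hc' h2
  rcases Set.mem_insert_iff.mp hc with rfl | hc'
  · have hd' : d ∈ t := (Set.mem_insert_iff.mp hd).resolve_left (fun h => n6 h.symm)
    rcases hdom with hall | hnone
    · exact h4 (hall a ha').symm
    · exact hnone b hb' h2.symm
  rcases Set.mem_insert_iff.mp hd with rfl | hd'
  · rcases hdom with hall | hnone
    · exact h6 (hall b hb').symm
    · exact hnone c hc' h3.symm
  exact ht ⟨a, b, c, d, ha', hb', hc', hd', h1, h2, h3, h4, h5, h6⟩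

theorem HasP4On.of_compl {V : Type} {G : SimpleGraph V} {s : Set V}
    (h : HasP4On Gᶜ s) : HasP4On G s := by
  obtain ⟨a, b, c, d, ha, hb, hc, hd, h1, h2, h3, h4, h5, h6⟩ := h
  have n2 : a ≠ c := by rintro rfl; exact h5 h3
  have n3 : a ≠ d := by rintro rfl; exact h4 h3.symm
  have n5 : b ≠ d := by rintro rfl; exact h5 h1
  rw [SimpleGraph.compl_adj, not_and] at h4 h5 h6
  rw [SimpleGraph.compl_adj] at h1 h2 h3
  refine ⟨c, a, d, b, hc, ha, hd, hb, ?_, ?_, ?_, ?_, ?_, ?_⟩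
  · exact (not_not.mp (h4 n2)).symm
  · exact not_not.mp (h5 n3)
  · exact (not_not.mp (h6 n5)).symm
  · intro hadj; exact h3.2 hadj
  · intro hadj; exact h2.2 hadj.symm
  · intro hadj; exact h1.2 hadj

theorem reach_split {V : Type} (G : SimpleGraph V) (s' A B : Set V) (v b0 x : V)
    (hv : v ∉ s') (hAB : A ∪ B = s')
    (hempty : ∀ x ∈ A, ∀ y ∈ B, ¬ G.Adj x y)
    (hb0 : b0 ∈ B) (hvb0 : G.Adj v b0) (hx : x ∈ A) (hvx : ¬ G.Adj v x)
    (hP4 : ¬ HasP4On G (insert v s')) : GoodSplit G (insert v s') := by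
  have hAs : A ⊆ s' := hAB ▸ Set.subset_union_left
  have hBs : B ⊆ s' := hAB ▸ Set.subset_union_right
  set r : V → V → Prop := fun y z => y ∈ A ∧ z ∈ A ∧ G.Adj y z with hr
  set C : Set V := {y | Relation.ReflTransGen r x y} with hC
  have key : ∀ y ∈ C, y ∈ A ∧ ¬ G.Adj v y := by
    intro y hy
    induction hy with
    | refl => exact ⟨hx, hvx⟩
    | @tail p q hp hpq ih =>
      obtain ⟨hpA, hvp⟩ := ih
      obtain ⟨_, hqA, hpq'⟩ := hpq
      refine ⟨hqA, fun hvq => ?_⟩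
      exact hP4 ⟨p, q, v, b0,
        Set.mem_insert_of_mem _ (hAs hpA), Set.mem_insert_of_mem _ (hAs hqA),
        Set.mem_insert _ _, Set.mem_insert_of_mem _ (hBs hb0),
        hpq', hvq.symm, hvb0, fun h => hvp h.symm, hempty p hpA b0 hb0,
        hempty q hqA b0 hb0⟩
  have hCA : C ⊆ A := fun y hy => (key y hy).1
  have hCsub : C ⊆ insert v s' := fun y hy => Set.mem_insert_of_mem _ (hAs (hCA hy))
  refine ⟨C, insert v s' \ C, Set.union_diff_cancel hCsub, Set.inter_diff_self _ _,
    ⟨x, Relation.ReflTransGen.refl⟩,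
    ⟨v, Set.mem_insert _ _, fun hvC => hv (hAs (hCA hvC))⟩, Or.inr ?_⟩
  intro y hy z hz hadj
  obtain ⟨hzmem, hzC⟩ := hz
  rcases Set.mem_insert_iff.mp hzmem with rfl | hzs
  · exact (key y hy).2 hadj.symm
  · have hzAB : z ∈ A ∪ B := hAB.symm ▸ hzs
    rcases hzAB with hzA | hzB
    · exact hzC (Relation.ReflTransGen.tail hy ⟨hCA hy, hzA, hadj⟩)
    · exact hempty y (hCA hy) z hzB hadj


theorem seinsche_step_s8 {V : Type} (G : SimpleGraph V) (s' A B : Set V) (v : V)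
    (hv : v ∉ s') (hAB : A ∪ B = s') (hd : A ∩ B = ∅)
    (hA : A.Nonempty) (hB : B.Nonempty)
    (hempty : ∀ x ∈ A, ∀ y ∈ B, ¬ G.Adj x y)
    (hP4 : ¬ HasP4On G (insert v s')) : GoodSplit G (insert v s') := by
  have hAs : A ⊆ s' := hAB ▸ Set.subset_union_left
  have hBs : B ⊆ s' := hAB ▸ Set.subset_union_right
  by_cases hcB : ∀ y ∈ B, ¬ G.Adj v y
  · refine ⟨B, insert v A, by rw [Set.union_insert, Set.union_comm, hAB], ?_, hB,
      ⟨v, Set.mem_insert _ _⟩, Or.inr ?_⟩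
    · ext y
      simp only [Set.mem_inter_iff, Set.mem_insert_iff, Set.mem_empty_iff_false, iff_false,
        not_and, not_or]
      intro hyB
      exact ⟨fun h => hv (h ▸ hBs hyB), fun hyA => (Set.eq_empty_iff_forall_notMem.mp hd y)
        ⟨hyA, hyB⟩⟩
    · rintro x hx y hy hadj
      rcases Set.mem_insert_iff.mp hy with rfl | hyA
      · exact hcB x hx hadj.symm
      · exact hempty y hyA x hx hadj.symm
  · by_cases hcA : ∀ y ∈ A, ¬ G.Adj v y
    · refine ⟨A, insert v B, by rw [Set.union_insert, hAB], ?_, hA,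
        ⟨v, Set.mem_insert _ _⟩, Or.inr ?_⟩
      · ext y
        simp only [Set.mem_inter_iff, Set.mem_insert_iff, Set.mem_empty_iff_false, iff_false,
          not_and, not_or]
        intro hyA
        exact ⟨fun h => hv (h ▸ hAs hyA), fun hyB => (Set.eq_empty_iff_forall_notMem.mp hd y)
          ⟨hyA, hyB⟩⟩
      · rintro x hx y hy hadj
        rcases Set.mem_insert_iff.mp hy with rfl | hyB
        · exact hcA x hx hadj.symm
        · exact hempty x hx y hyB hadj
    · push_neg at hcA hcB
      obtain ⟨a0, ha0, hva0⟩ := hcA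
      obtain ⟨b0, hb0, hvb0⟩ := hcB
      by_cases hxA : ∃ x ∈ A, ¬ G.Adj v x
      · obtain ⟨x, hxa, hvx⟩ := hxA
        exact reach_split G s' A B v b0 x hv hAB hempty hb0 hvb0 hxa hvx hP4
      · by_cases hxB : ∃ x ∈ B, ¬ G.Adj v x
        · obtain ⟨x, hxb, hvx⟩ := hxB
          exact reach_split G s' B A v a0 x hv (by rw [Set.union_comm, hAB])
            (fun p hp q hq h => hempty q hq p hp h.symm) ha0 hva0 hxb hvx hP4
        · push_neg at hxA hxB
          refine ⟨{v}, s', Set.singleton_union, ?_, ⟨v, rfl⟩, hA.mono hAs, Or.inl ?_⟩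
          · rw [Set.singleton_inter_eq_empty]; exact hv
          · intro x hx y hy
            rcases Set.mem_singleton_iff.mp hx
            rw [← hAB] at hy
            rcases hy with hyA | hyB
            · exact hxA y hyA
            · exact hxB y hyB

theorem GoodSplit.of_compl {V : Type} {G : SimpleGraph V} {s : Set V}
    (h : GoodSplit Gᶜ s) : GoodSplit G s := by
  obtain ⟨A, B, hAB, hd, hA, hB, hcross⟩ := h
  have hne : ∀ x ∈ A, ∀ y ∈ B, x ≠ y := by
    rintro x hx y hy rfl
    exact (Set.eq_empty_iff_forall_notMem.mp hd x) ⟨hx, hy⟩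
  refine ⟨A, B, hAB, hd, hA, hB, ?_⟩
  rcases hcross with hcomp | hempty
  · exact Or.inr fun x hx y hy => (((SimpleGraph.compl_adj _ _ _).mp (hcomp x hx y hy)).2)
  · refine Or.inl fun x hx y hy => ?_
    by_contra hadj
    exact hempty x hx y hy ((SimpleGraph.compl_adj _ _ _).mpr ⟨hne x hx y hy, hadj⟩)


theorem seinsche {V : Type} [Fintype V] :
    ∀ (n : ℕ) (G : SimpleGraph V) (s : Set V), s.ncard ≤ n → 2 ≤ s.ncard →
      ¬ HasP4On G s → GoodSplit G s := by
  intro n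
  induction n with
  | zero => intro G s hn h2 _; omega
  | succ n ih =>
    intro G s hn h2 hP4
    obtain ⟨v, hv⟩ : s.Nonempty := Set.nonempty_of_ncard_ne_zero (by omega)
    set s' := s \ {v} with hs'
    have hs'card : s'.ncard = s.ncard - 1 := Set.ncard_diff_singleton_of_mem hv
    have hins : insert v s' = s := by
      rw [hs', Set.insert_diff_singleton, Set.insert_eq_self.mpr hv]
    have hvns : v ∉ s' := fun h => h.2 rfl
    have hP4' : ¬ HasP4On G s' := fun h => hP4 (h.mono Set.diff_subset)
    rcases eq_or_lt_of_le (show 1 ≤ s'.ncard by omega) with h1 | h1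
    · obtain ⟨u, hu⟩ := Set.ncard_eq_one.mp h1.symm
      have huv : u ≠ v := by
        intro h; apply hvns; rw [hu]; exact h ▸ rfl
      refine ⟨{v}, {u}, ?_, ?_, ⟨v, rfl⟩, ⟨u, rfl⟩, ?_⟩
      · rw [Set.singleton_union, ← hu, hins]
      · rw [Set.singleton_inter_eq_empty]; exact fun h => huv (Set.mem_singleton_iff.mp h).symm
      · by_cases hadj : G.Adj v u
        · exact Or.inl (by rintro x rfl y rfl; exact hadj)
        · exact Or.inr (by rintro x rfl y rfl; exact hadj)
    · obtain ⟨A, B, hAB, hd, hA, hB, hcross⟩ :=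
        ih G s' (by omega) (by omega) hP4'
      rcases hcross with hcomp | hempty
      · apply GoodSplit.of_compl
        rw [← hins]
        apply seinsche_step_s8 Gᶜ s' A B v hvns hAB hd hA hB
        · intro x hx y hy hadj
          exact ((SimpleGraph.compl_adj _ _ _).mp hadj).2 (hcomp x hx y hy)
        · intro h
          exact hP4 (hins ▸ h.of_compl)
      · rw [← hins]
        exact seinsche_step_s8 G s' A B v hvns hAB hd hA hB hempty (hins ▸ hP4)

def GoodOn {V : Type} (G : SimpleGraph V) (W : Set V) : Prop :=
  ∃ v : V, ∃ A B : Set V, A ∪ B = W ∧ A ∩ B = {v} ∧ 1 < A.ncard ∧ 1 < B.ncard ∧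
    ¬ HasP4On G A ∧ ¬ HasP4On G B ∧
    ((∀ x ∈ A \ {v}, ∀ y ∈ B \ {v}, G.Adj x y) ∨ (∀ x ∈ A \ {v}, ∀ y ∈ B \ {v}, ¬ G.Adj x y))

theorem ncard_preimage_val {V : Type} [Fintype V] {W C : Set V} (hCW : C ⊆ W) :
    (Subtype.val ⁻¹' C : Set ↥W).ncard = C.ncard := by
  rw [← Set.ncard_image_of_injective (Subtype.val ⁻¹' C) Subtype.val_injective,
    Subtype.image_preimage_val, Set.inter_eq_self_of_subset_right hCW]

theorem goodOn_of_p4free {V : Type} [Fintype V] (G : SimpleGraph V) (W : Set V)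
    (h3 : 3 ≤ W.ncard) (hfree : ¬ HasP4On G W) : GoodOn G W := by
  obtain ⟨v0, hv0⟩ : W.Nonempty := Set.nonempty_of_ncard_ne_zero (by omega)
  set W' := W \ {v0} with hW'
  have hW'card : W'.ncard = W.ncard - 1 := Set.ncard_diff_singleton_of_mem hv0
  have hv0W' : v0 ∉ W' := fun h => h.2 rfl
  have hins : insert v0 W' = W := by
    rw [hW', Set.insert_diff_singleton, Set.insert_eq_self.mpr hv0]
  obtain ⟨A, B, hAB, hd, hA, hB, hcross⟩ :=
    seinsche W'.ncard G W' le_rfl (by omega) (fun h => hfree (h.mono Set.diff_subset))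
  have hAW' : A ⊆ W' := hAB ▸ Set.subset_union_left
  have hBW' : B ⊆ W' := hAB ▸ Set.subset_union_right
  have hv0A : v0 ∉ A := fun h => hv0W' (hAW' h)
  have hv0B : v0 ∉ B := fun h => hv0W' (hBW' h)
  refine ⟨v0, insert v0 A, insert v0 B, ?_, ?_, ?_, ?_, ?_, ?_, ?_⟩
  · rw [Set.insert_union, Set.union_insert, Set.insert_idem, hAB, hins]
  · ext x
    simp only [Set.mem_inter_iff, Set.mem_insert_iff, Set.mem_singleton_iff]
    constructor
    · rintro ⟨(rfl | h1), (h2 | h2)⟩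
      · rfl
      · rfl
      · exact h2
      · exact (Set.eq_empty_iff_forall_notMem.mp hd x ⟨h1, h2⟩).elim
    · rintro rfl; exact ⟨Or.inl rfl, Or.inl rfl⟩
  · rw [Set.ncard_insert_of_notMem hv0A]
    have := (Set.ncard_pos (Set.toFinite _)).mpr hA; omega
  · rw [Set.ncard_insert_of_notMem hv0B]
    have := (Set.ncard_pos (Set.toFinite _)).mpr hB; omega
  · exact fun h => hfree (h.mono (Set.insert_subset hv0 (hAW'.trans Set.diff_subset)))
  · exact fun h => hfree (h.mono (Set.insert_subset hv0 (hBW'.trans Set.diff_subset)))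
  · rw [Set.insert_diff_self_of_notMem hv0A, Set.insert_diff_self_of_notMem hv0B]
    exact hcross

theorem core_off {V : Type} [Fintype V] (G : SimpleGraph V) (v : V) (V1 V2 : Set V)
    (hmeet : V1 ∩ V2 = {v})
    (hfree1 : ¬ HasP4On G V1) (hfree2 : ¬ HasP4On G V2)
    (hcross : (∀ x ∈ V1 \ {v}, ∀ y ∈ V2 \ {v}, G.Adj x y) ∨
      (∀ x ∈ V1 \ {v}, ∀ y ∈ V2 \ {v}, ¬ G.Adj x y))
    (W : Set V) (hvW : v ∉ W) (b : V) (hb : b ∈ W ∩ V1) (ha : (W ∩ V2).Nonempty)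
    (h2 : 2 ≤ (W ∩ V1).ncard) (hun : W ∩ V1 ∪ W ∩ V2 = W) : GoodOn G W := by
  have hdisj : ∀ x, x ∈ W ∩ V1 → x ∈ W ∩ V2 → False := by
    rintro x ⟨hxW, hx1⟩ ⟨-, hx2⟩
    have hx : x ∈ V1 ∩ V2 := ⟨hx1, hx2⟩
    rw [hmeet] at hx
    exact hvW (hx ▸ hxW)
  have hbv : b ≠ v := fun h => hvW (h ▸ hb.1)
  have hbW2 : b ∉ W ∩ V2 := fun h => hdisj b hb h
  have hW2sub : ∀ y ∈ W ∩ V2, y ∈ V2 \ {v} :=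
    fun y hy => ⟨hy.2, fun hh => hvW (hh ▸ hy.1)⟩
  refine ⟨b, W ∩ V1, insert b (W ∩ V2), ?_, ?_, h2, ?_, ?_, ?_, ?_⟩
  · rw [Set.union_insert, Set.insert_eq_self.mpr (Set.mem_union_left _ hb), hun]
  · ext x
    simp only [Set.mem_inter_iff, Set.mem_insert_iff, Set.mem_singleton_iff]
    constructor
    · rintro ⟨hx1, (rfl | hx2)⟩
      · rfl
      · exact absurd (hdisj x hx1 hx2) (fun h => h)
    · rintro rfl; exact ⟨hb, Or.inl rfl⟩
  · rw [Set.ncard_insert_of_notMem hbW2]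
    have := (Set.ncard_pos (Set.toFinite _)).mpr ha; omega
  · exact fun h => hfree1 (h.mono Set.inter_subset_right)
  · refine not_hasP4On_insert ?_ (fun h => hfree2 (h.mono Set.inter_subset_right))
    rcases hcross with h | h
    · exact Or.inl fun y hy => h b ⟨hb.2, hbv⟩ y (hW2sub y hy)
    · exact Or.inr fun y hy => h b ⟨hb.2, hbv⟩ y (hW2sub y hy)
  · rw [Set.insert_diff_self_of_notMem hbW2]
    rcases hcross with h | h
    · exact Or.inl fun x hx y hy =>
        h x ⟨hx.1.2, fun hh => hvW (hh ▸ hx.1.1)⟩ y (hW2sub y hy)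
    · exact Or.inr fun x hx y hy =>
        h x ⟨hx.1.2, fun hh => hvW (hh ▸ hx.1.1)⟩ y (hW2sub y hy)

/-- `G` is a `(v, G[V1], G[V2])`-pseudo-cograph. -/
def IsPseudoCographAt {V : Type} (G : SimpleGraph V) (v : V) (V1 V2 : Set V) : Prop :=
  V1 ∪ V2 = Set.univ ∧ V1 ∩ V2 = {v} ∧ 1 < V1.ncard ∧ 1 < V2.ncard ∧
  IsP4Free (G.induce V1) ∧ IsP4Free (G.induce V2) ∧
  ((∀ x ∈ V1 \ {v}, ∀ y ∈ V2 \ {v}, G.Adj x y) ∨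
   (∀ x ∈ V1 \ {v}, ∀ y ∈ V2 \ {v}, ¬ G.Adj x y))

/-- `G` is a pseudo-cograph. -/
def IsPseudoCograph {V : Type} (G : SimpleGraph V) : Prop :=
  Nat.card V ≤ 2 ∨ ∃ (v : V) (V1 V2 : Set V), IsPseudoCographAt G v V1 V2

theorem goodOn_isPseudoCograph {V : Type} [Fintype V] (G : SimpleGraph V) (W : Set V)
    (h : GoodOn G W) : IsPseudoCograph (G.induce W) := by
  obtain ⟨v, A, B, hun, hmeet, hA2, hB2, hAp, hBp, hcross⟩ := h
  have hvAB : v ∈ A ∩ B := by rw [hmeet]; rfl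
  have hAW : A ⊆ W := hun ▸ Set.subset_union_left
  have hBW : B ⊆ W := hun ▸ Set.subset_union_right
  have hvW : v ∈ W := hAW hvAB.1
  right
  refine ⟨⟨v, hvW⟩, Subtype.val ⁻¹' A, Subtype.val ⁻¹' B, ?_, ?_, ?_, ?_, ?_, ?_, ?_⟩
  · ext x
    simp only [Set.mem_union, Set.mem_preimage, Set.mem_univ, iff_true]
    have hx : x.1 ∈ A ∪ B := by rw [hun]; exact x.2
    exact hx
  · ext x
    simp only [Set.mem_inter_iff, Set.mem_preimage, Set.mem_singleton_iff]
    constructor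
    · intro hx
      have hx' : x.1 ∈ A ∩ B := hx
      rw [hmeet] at hx'
      exact Subtype.ext hx'
    · rintro rfl; exact hvAB
  · rw [ncard_preimage_val hAW]; exact hA2
  · rw [ncard_preimage_val hBW]; exact hB2
  · rw [isP4Free_induce_iff, hasP4On_induce_iff, Subtype.image_preimage_val,
      Set.inter_eq_self_of_subset_right hAW]
    exact hAp
  · rw [isP4Free_induce_iff, hasP4On_induce_iff, Subtype.image_preimage_val,
      Set.inter_eq_self_of_subset_right hBW]
    exact hBp
  · rcases hcross with h | h
    · refine Or.inl fun x hx y hy => ?_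
      rw [adj_induce_iff]
      exact h x.1 ⟨hx.1, fun hh => hx.2 (Subtype.ext hh)⟩
        y.1 ⟨hy.1, fun hh => hy.2 (Subtype.ext hh)⟩
    · refine Or.inr fun x hx y hy => ?_
      rw [adj_induce_iff]
      exact h x.1 ⟨hx.1, fun hh => hx.2 (Subtype.ext hh)⟩
        y.1 ⟨hy.1, fun hh => hy.2 (Subtype.ext hh)⟩

theorem core {V : Type} [Fintype V] (G : SimpleGraph V) (v : V) (V1 V2 : Set V)
    (hps : IsPseudoCographAt G v V1 V2) (W : Set V) (h3 : 3 ≤ W.ncard) : GoodOn G W := by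
  obtain ⟨hun, hmeet, -, -, hp1, hp2, hcross⟩ := hps
  rw [isP4Free_induce_iff] at hp1 hp2
  have hv12 : v ∈ V1 ∩ V2 := by rw [hmeet]; rfl
  by_cases hW1 : W ⊆ V1
  · exact goodOn_of_p4free G W h3 (fun h => hp1 (h.mono hW1))
  by_cases hW2 : W ⊆ V2
  · exact goodOn_of_p4free G W h3 (fun h => hp2 (h.mono hW2))
  obtain ⟨b, hbW, hb2⟩ := Set.not_subset.mp hW2
  obtain ⟨a, haW, ha1⟩ := Set.not_subset.mp hW1
  have hb1 : b ∈ V1 := by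
    have : b ∈ V1 ∪ V2 := by rw [hun]; trivial
    exact this.resolve_right hb2
  have ha2 : a ∈ V2 := by
    have : a ∈ V1 ∪ V2 := by rw [hun]; trivial
    exact this.resolve_left ha1
  have hunW : W ∩ V1 ∪ W ∩ V2 = W := by
    rw [← Set.inter_union_distrib_left, hun, Set.inter_univ]
  by_cases hvW : v ∈ W
  · refine ⟨v, W ∩ V1, W ∩ V2, hunW, ?_, ?_, ?_,
      fun h => hp1 (h.mono Set.inter_subset_right),
      fun h => hp2 (h.mono Set.inter_subset_right), ?_⟩
    · ext x
      simp only [Set.mem_inter_iff, Set.mem_singleton_iff]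
      constructor
      · rintro ⟨⟨hxW, hx1⟩, ⟨-, hx2⟩⟩
        have hx : x ∈ V1 ∩ V2 := ⟨hx1, hx2⟩
        rw [hmeet] at hx
        exact hx
      · rintro rfl; exact ⟨⟨hvW, hv12.1⟩, ⟨hvW, hv12.2⟩⟩
    · rw [Set.one_lt_ncard (Set.toFinite _)]
      exact ⟨v, ⟨hvW, hv12.1⟩, b, ⟨hbW, hb1⟩, fun h => hb2 (h ▸ hv12.2)⟩
    · rw [Set.one_lt_ncard (Set.toFinite _)]
      exact ⟨v, ⟨hvW, hv12.2⟩, a, ⟨haW, ha2⟩, fun h => ha1 (h ▸ hv12.1)⟩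
    · rcases hcross with h | h
      · exact Or.inl fun x hx y hy =>
          h x ⟨hx.1.2, hx.2⟩ y ⟨hy.1.2, hy.2⟩
      · exact Or.inr fun x hx y hy =>
          h x ⟨hx.1.2, hx.2⟩ y ⟨hy.1.2, hy.2⟩
  · have hdisj : Disjoint (W ∩ V1) (W ∩ V2) := by
      rw [Set.disjoint_iff_inter_eq_empty]
      ext x
      simp only [Set.mem_inter_iff, Set.mem_empty_iff_false, iff_false, not_and]
      rintro ⟨hxW, hx1⟩ - hx2
      have hx : x ∈ V1 ∩ V2 := ⟨hx1, hx2⟩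
      rw [hmeet] at hx
      exact hvW (hx ▸ hxW)
    have hsum : (W ∩ V1).ncard + (W ∩ V2).ncard = W.ncard := by
      rw [← Set.ncard_union_eq hdisj (Set.toFinite _) (Set.toFinite _), hunW]
    rcases le_or_gt 2 (W ∩ V1).ncard with h2 | h2
    · exact core_off G v V1 V2 hmeet hp1 hp2 hcross W hvW b ⟨hbW, hb1⟩
        ⟨a, haW, ha2⟩ h2 hunW
    · have hcross' : (∀ x ∈ V2 \ {v}, ∀ y ∈ V1 \ {v}, G.Adj x y) ∨
          (∀ x ∈ V2 \ {v}, ∀ y ∈ V1 \ {v}, ¬ G.Adj x y) := by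
        rcases hcross with h | h
        · exact Or.inl fun x hx y hy => (h y hy x hx).symm
        · exact Or.inr fun x hx y hy hadj => h y hy x hx hadj.symm
      have h2' : 2 ≤ (W ∩ V2).ncard := by
        have h1 : 1 ≤ (W ∩ V1).ncard := (Set.ncard_pos (Set.toFinite _)).mpr ⟨b, hbW, hb1⟩
        omega
      have hunW' : W ∩ V2 ∪ W ∩ V1 = W := by rw [Set.union_comm]; exact hunW
      exact core_off G v V2 V1 (by rw [Set.inter_comm]; exact hmeet) hp2 hp1 hcross' W hvW
        a ⟨haW, ha2⟩ ⟨b, hbW, hb1⟩ h2' hunW'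

/-- Every induced subgraph (on a nonempty vertex set) of a pseudo-cograph is a
pseudo-cograph. -/
theorem isPseudoCograph_induce {V : Type} [Fintype V] (G : SimpleGraph V)
    (h : IsPseudoCograph G) (W : Set V) (hW : W.Nonempty) :
    IsPseudoCograph (G.induce W) := by
  by_cases hsmall : W.ncard ≤ 2
  · left
    rw [Nat.card_coe_set_eq]
    exact hsmall
  · push_neg at hsmall
    rcases h with hc | ⟨v, V1, V2, hps⟩
    · exfalso
      have hle := Set.ncard_le_ncard (Set.subset_univ W) (Set.toFinite _)
      rw [Set.ncard_univ] at hle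
      omega
    · exact goodOn_isPseudoCograph G W (core G v V1 V2 hps W (by omega))
end

section
/- A finite simple graph G = (V,E) is a primitive pseudo-cograph if and only if |V| ≥ 4 and there exist a vertex v ∈ V and two sequences of distinct vertices Y = (y₁, …, y_{ℓ−1}, y_ℓ = v) and Z = (z₁, …, z_{m−1}, z_m = v) with ℓ, m ≥ 2, such that Y ∩ Z = {v}, Y ∪ Z = V, and one of the following holds: (a) the induced subgraphs G[Y] and G[Z] are connected and the edges of G are exactly the pairs {y_i, y_j} with 1 ≤ i < j ≤ ℓ and i odd, together with the pairs {z_i, z_j} with 1 ≤ i < j ≤ m and i odd; or (b) the induced subgraphs G[Y] and G[Z] are disconnected and the edges of G are exactly the pairs {y_i, y_j} with 1 ≤ i < j ≤ ℓ and i even, the pairs {z_i, z_j} with 1 ≤ i < j ≤ m and i even, and all pairs {y, z} with y ∈ Y\{v} and z ∈ Z\{v}. -/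
section Auxiliary

variable {V : Type}
open Set

open Set

variable {V : Type}

lemma pairSet_eq {s t u w : V} (h : ({s, t} : Set V) = {u, w}) :
    (s = u ∧ t = w) ∨ (s = w ∧ t = u) := by
  have hs : s ∈ ({u, w} : Set V) := by rw [← h]; simp
  have ht : t ∈ ({u, w} : Set V) := by rw [← h]; simp
  have hw : w ∈ ({s, t} : Set V) := by rw [h]; simp
  have hu : u ∈ ({s, t} : Set V) := by rw [h]; simp
  simp only [Set.mem_insert_iff, Set.mem_singleton_iff] at hs ht hu hw
  rcases hs with hs | hs <;> rcases ht with ht | ht <;> tauto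

def NoP4 {V : Type} (G : SimpleGraph V) (S : Set V) : Prop :=
  ¬ ∃ a b c d, a ∈ S ∧ b ∈ S ∧ c ∈ S ∧ d ∈ S ∧
    G.Adj a b ∧ G.Adj b c ∧ G.Adj c d ∧ ¬ G.Adj a c ∧ ¬ G.Adj a d ∧ ¬ G.Adj b d


lemma noP4_of_isP4Free {G : SimpleGraph V} {S : Set V} (h : IsP4Free (G.induce S)) :
    NoP4 G S := by
  rintro ⟨a, b, c, d, ha, hb, hc, hd, hab, hbc, hcd, hac, had, hbd⟩
  have hab' : a ≠ b := G.ne_of_adj hab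
  have hbc' : b ≠ c := G.ne_of_adj hbc
  have hcd' : c ≠ d := G.ne_of_adj hcd
  have hac' : a ≠ c := fun e => had (by rw [e]; exact hcd)
  have had' : a ≠ d := fun e => hac (by rw [e]; exact G.adj_symm hcd)
  have hbd' : b ≠ d := fun e => had (by rw [← e]; exact hab)
  apply h
  refine ⟨⟨⟨![⟨a, ha⟩, ⟨b, hb⟩, ⟨c, hc⟩, ⟨d, hd⟩], ?_⟩, ?_⟩⟩
  · intro i j hij
    fin_cases i <;> fin_cases j <;>
      simp_all [Subtype.ext_iff] <;> first | rfl | (exact (by omega : False).elim)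
  · intro i j
    fin_cases i <;> fin_cases j <;>
      simp only [Matrix.cons_val_zero, Matrix.cons_val_one, Matrix.head_cons,
        Matrix.cons_val_two, Matrix.tail_cons, Matrix.cons_val_three,
        Matrix.cons_val_fin_one, Fin.isValue] <;>
      rw [show ∀ u w : ↥S, (G.induce S).Adj u w ↔ G.Adj u.1 w.1 from fun _ _ => Iff.rfl,
        SimpleGraph.pathGraph_adj] <;>
      simp only [show ((0:Fin 4)).val = 0 from rfl, show ((1:Fin 4)).val = 1 from rfl,
        show ((2:Fin 4)).val = 2 from rfl, show ((3:Fin 4)).val = 3 from rfl] <;>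
      norm_num <;>
      first
        | exact G.loopless _
        | assumption
        | exact G.adj_symm hab | exact G.adj_symm hbc | exact G.adj_symm hcd
        | exact fun h' => hac (G.adj_symm h') | exact fun h' => had (G.adj_symm h')
        | exact fun h' => hbd (G.adj_symm h')

lemma isP4Free_of_noP4 {G : SimpleGraph V} {S : Set V} (h : NoP4 G S) :
    IsP4Free (G.induce S) := by
  rintro ⟨f⟩
  have key : ∀ i j : Fin 4, (i.val + 1 = j.val ∨ j.val + 1 = i.val) →
      G.Adj (f i).1 (f j).1 := fun i j hij =>
    f.map_adj_iff.mpr (SimpleGraph.pathGraph_adj.mpr hij)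
  have key2 : ∀ i j : Fin 4, ¬ (i.val + 1 = j.val ∨ j.val + 1 = i.val) →
      ¬ G.Adj (f i).1 (f j).1 := fun i j hij hadj =>
    hij (SimpleGraph.pathGraph_adj.mp (f.map_adj_iff.mp hadj))
  exact h ⟨(f 0).1, (f 1).1, (f 2).1, (f 3).1, (f 0).2, (f 1).2, (f 2).2, (f 3).2,
    key 0 1 (by decide), key 1 2 (by decide), key 2 3 (by decide),
    key2 0 2 (by decide), key2 0 3 (by decide), key2 1 3 (by decide)⟩

def Disc (G : SimpleGraph V) (S : Set V) : Prop :=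
  ∃ T, T ⊆ S ∧ T.Nonempty ∧ (S \ T).Nonempty ∧ ∀ a ∈ T, ∀ b ∈ S \ T, ¬ G.Adj a b

lemma noP4_mono {G : SimpleGraph V} {S T : Set V} (hTS : T ⊆ S) (h : NoP4 G S) :
    NoP4 G T := by
  rintro ⟨a, b, c, d, ha, hb, hc, hd, rest⟩
  exact h ⟨a, b, c, d, hTS ha, hTS hb, hTS hc, hTS hd, rest⟩

lemma noP4_compl {G : SimpleGraph V} {S : Set V} (h : NoP4 G S) : NoP4 Gᶜ S := by
  rintro ⟨a, b, c, d, ha, hb, hc, hd, hab, hbc, hcd, hac, had, hbd⟩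
  have hac' : a ≠ c := fun e => had (by rw [e]; exact hcd)
  have had' : a ≠ d := fun e => hac (by rw [e]; exact Gᶜ.adj_symm hcd)
  have hbd' : b ≠ d := fun e => had (by rw [← e]; exact hab)
  have gac : G.Adj a c := by
    by_contra h'; exact hac ⟨hac', h'⟩
  have gad : G.Adj a d := by
    by_contra h'; exact had ⟨had', h'⟩
  have gbd : G.Adj b d := by
    by_contra h'; exact hbd ⟨hbd', h'⟩
  exact h ⟨b, d, a, c, hb, hd, ha, hc, gbd, G.adj_symm gad, gac,
    fun h' => hab.2 (G.adj_symm h'), fun h' => hbc.2 h', fun h' => hcd.2 (G.adj_symm h')⟩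

lemma seinsche_step_s10 {G : SimpleGraph V} {S : Set V} {x : V} {A B : Set V}
    (hx : x ∈ S) (hpart : S \ {x} = A ∪ B) (hdisj : A ∩ B = ∅)
    (hA : A.Nonempty) (hB : B.Nonempty)
    (hAB : ∀ a ∈ A, ∀ b ∈ B, ¬ G.Adj a b) (hP4 : NoP4 G S) :
    Disc G S ∨ Disc Gᶜ S := by
  have hAS : A ⊆ S := fun a ha => by
    have : a ∈ S \ {x} := hpart ▸ Or.inl ha
    exact this.1
  have hBS : B ⊆ S := fun b hb => by
    have : b ∈ S \ {x} := hpart ▸ Or.inr hb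
    exact this.1
  have hxA : x ∉ A := fun h' => by
    have : x ∈ S \ {x} := hpart ▸ Or.inl h'
    exact this.2 rfl
  have hxB : x ∉ B := fun h' => by
    have : x ∈ S \ {x} := hpart ▸ Or.inr h'
    exact this.2 rfl
  -- membership decomposition
  have hdecomp : ∀ c ∈ S, c = x ∨ c ∈ A ∨ c ∈ B := by
    intro c hc
    by_cases hcx : c = x
    · exact Or.inl hcx
    · have : c ∈ A ∪ B := hpart ▸ (show c ∈ S \ {x} from ⟨hc, hcx⟩)
      exact Or.inr this
  -- side claim: for a "side" C with the other side D and witness of adjacency in D,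
  -- either x is adjacent to all of C, or Disc G S.
  have side : ∀ C D : Set V, C ⊆ S → D ⊆ S → x ∉ C →
      (∀ a ∈ C, ∀ b ∈ D, ¬ G.Adj a b) → (∃ b ∈ D, G.Adj x b) →
      (∀ c ∈ S, c = x ∨ c ∈ C ∨ c ∈ D) →
      (∀ a ∈ C, G.Adj x a) ∨ Disc G S := by
    intro C D hCS hDS hxC hCD hex hdec
    obtain ⟨b0, hb0D, hxb0⟩ := hex
    by_cases hall : ∀ a ∈ C, G.Adj x a
    · exact Or.inl hall
    · push_neg at hall
      obtain ⟨w, hwC, hxw⟩ := hall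
      right
      by_cases hedge : ∃ a1 ∈ C, ∃ a0 ∈ C, G.Adj x a1 ∧ ¬ G.Adj x a0 ∧ G.Adj a1 a0
      · obtain ⟨a1, ha1, a0, ha0, hxa1, hxa0, ha10⟩ := hedge
        exact (hP4 ⟨a0, a1, x, b0, hCS ha0, hCS ha1, hx, hDS hb0D,
          G.adj_symm ha10, G.adj_symm hxa1, hxb0,
          fun h' => hxa0 (G.adj_symm h'), hCD a0 ha0 b0 hb0D,
          hCD a1 ha1 b0 hb0D⟩).elim
      · push_neg at hedge
        -- T = non-neighbors of x in C
        refine ⟨{a ∈ C | ¬ G.Adj x a}, fun a ha => hCS ha.1, ⟨w, hwC, hxw⟩,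
          ⟨x, hx, fun h' => hxC h'.1⟩, ?_⟩
        rintro a ⟨haC, haX⟩ b ⟨hbS, hbT⟩
        rcases hdec b hbS with rfl | hbC | hbD
        · exact fun h' => haX (G.adj_symm h')
        · intro h'
          by_cases hxb : G.Adj x b
          · exact hedge b hbC a haC hxb haX (G.adj_symm h')
          · exact hbT ⟨hbC, hxb⟩
        · exact hCD a haC b hbD
  by_cases hAx : ∃ a ∈ A, G.Adj x a
  · by_cases hBx : ∃ b ∈ B, G.Adj x b
    · -- x has neighbors on both sides
      have hA' := side A B hAS hBS hxA hAB hBx (by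
        intro c hc; rcases hdecomp c hc with h | h | h
        · exact Or.inl h
        · exact Or.inr (Or.inl h)
        · exact Or.inr (Or.inr h))
      rcases hA' with hA' | hA'
      · have hB' := side B A hBS hAS hxB
          (fun b hb a ha h' => hAB a ha b hb (G.adj_symm h')) hAx (by
            intro c hc; rcases hdecomp c hc with h | h | h
            · exact Or.inl h
            · exact Or.inr (Or.inr h)
            · exact Or.inr (Or.inl h))
        rcases hB' with hB' | hB'
        · -- x dominates S \ {x} : complement disconnected
          right
          refine ⟨{x}, by simpa using hx, ⟨x, rfl⟩, ?_, ?_⟩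
          · obtain ⟨a, haA⟩ := hA
            exact ⟨a, hAS haA, fun h' => hxA (h' ▸ haA)⟩
          · rintro a rfl b ⟨hbS, hbx⟩
            rcases hdecomp b hbS with h | h | h
            · exact absurd h hbx
            · exact fun h' => h'.2 (hA' b h)
            · exact fun h' => h'.2 (hB' b h)
        · exact Or.inl hB'
      · exact Or.inl hA'
    · -- x has no neighbor in B : B ∪ ... separated; take T = B
      push_neg at hBx
      left
      refine ⟨B, hBS, hB, ⟨x, hx, hxB⟩, ?_⟩
      rintro b hbB a ⟨haS, haB⟩
      rcases hdecomp a haS with rfl | h | h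
      · exact fun h' => hBx b hbB (G.adj_symm h')
      · exact fun h' => hAB a h b hbB (G.adj_symm h')
      · exact absurd h haB
  · push_neg at hAx
    left
    refine ⟨A, hAS, hA, ⟨x, hx, hxA⟩, ?_⟩
    rintro a haA b ⟨hbS, hbA⟩
    rcases hdecomp b hbS with rfl | h | h
    · exact fun h' => hAx a haA (G.adj_symm h')
    · exact absurd h hbA
    · exact fun h' => hAB a haA b h h'

lemma seinsche_s10 {G : SimpleGraph V} : ∀ n (S : Set V), S.Finite → S.ncard = n →
    2 ≤ n → NoP4 G S → Disc G S ∨ Disc Gᶜ S := by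
  intro n
  induction n using Nat.strong_induction_on with
  | _ n IH =>
    intro S hfin hcard hn hP4
    rcases Nat.lt_or_ge n 3 with h3 | h3
    · -- n = 2
      have hn2 : n = 2 := by omega
      obtain ⟨a, b, hab, hS⟩ := Set.ncard_eq_two.mp (hcard.trans hn2)
      by_cases hadj : G.Adj a b
      · right
        refine ⟨{a}, by simp [hS], ⟨a, rfl⟩, ⟨b, by simp [hS], by simp [hab.symm]⟩, ?_⟩
        rintro c rfl d ⟨hdS, hda⟩
        have : d = b := by
          rw [hS] at hdS
          rcases hdS with h | h
          · exact absurd h hda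
          · exact h
        subst this
        exact fun h' => h'.2 hadj
      · left
        refine ⟨{a}, by simp [hS], ⟨a, rfl⟩, ⟨b, by simp [hS], by simp [hab.symm]⟩, ?_⟩
        rintro c rfl d ⟨hdS, hda⟩
        have : d = b := by
          rw [hS] at hdS
          rcases hdS with h | h
          · exact absurd h hda
          · exact h
        subst this
        exact hadj
    · -- n ≥ 3 : peel a vertex
      have hne : S.Nonempty := by
        rw [← Set.ncard_pos hfin] at *; omega
      obtain ⟨x, hx⟩ := hne
      have hS' : (S \ {x}).ncard = n - 1 := by
        rw [Set.ncard_diff_singleton_of_mem hx, hcard]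
      have hfin' : (S \ {x}).Finite := hfin.subset (Set.diff_subset)
      have hsub : S \ {x} ⊆ S := Set.diff_subset
      have hIH := IH (n-1) (by omega) (S \ {x}) hfin' hS' (by omega)
        (noP4_mono hsub hP4)
      rcases hIH with ⟨T, hTS, hTne, hTne', hTsep⟩ | ⟨T, hTS, hTne, hTne', hTsep⟩
      · exact seinsche_step_s10 hx (by rw [Set.union_diff_cancel' (le_refl T) hTS]) 
          (Set.eq_empty_iff_forall_notMem.mpr (fun a h => h.2.2 h.1)) hTne hTne' hTsep hP4
      · have := seinsche_step_s10 (G := Gᶜ) hx (by rw [Set.union_diff_cancel' (le_refl T) hTS])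
          (Set.eq_empty_iff_forall_notMem.mpr (fun a h => h.2.2 h.1)) hTne hTne' hTsep (noP4_compl hP4)
        rcases this with h | h
        · exact Or.inr h
        · rw [compl_compl] at h
          exact Or.inl h

def ModOn (G : SimpleGraph V) (S M : Set V) : Prop :=
  M ⊆ S ∧ ∀ z ∈ S \ M, (∀ x ∈ M, G.Adj z x) ∨ (∀ x ∈ M, ¬ G.Adj z x)


/-- From a disconnection of `G` (resp `Gᶜ`) on `S` and triviality of modules avoiding `v`,
extract an isolated (resp dominating) vertex `a ≠ v`. -/
lemma extract_special {G : SimpleGraph V} {S : Set V} {v : V} (hv : v ∈ S)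
    (hmod : ∀ M, ModOn G S M → v ∉ M → M.Subsingleton)
    (hdisc : Disc G S) :
    ∃ a ∈ S, a ≠ v ∧ ∀ b ∈ S, b ≠ a → ¬ G.Adj a b := by
  obtain ⟨T, hTS, hTne, hTne', hTsep⟩ := hdisc
  by_cases hvT : v ∈ T
  · -- D = S \ T
    have hD : ModOn G S (S \ T) := by
      refine ⟨Set.diff_subset, ?_⟩
      intro z hz
      right
      intro x hx
      have hzT : z ∈ T := by
        rcases hz with ⟨hzS, hzD⟩
        by_contra h'
        exact hzD ⟨hzS, h'⟩
      exact hTsep z hzT x hx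
    have hsub := hmod _ hD (fun h => h.2 hvT)
    obtain ⟨a, haD⟩ := hTne'
    refine ⟨a, haD.1, fun h => haD.2 (h ▸ hvT), ?_⟩
    intro b hb hba
    by_cases hbD : b ∈ S \ T
    · exact absurd (hsub hbD haD) hba
    · have hbT : b ∈ T := by
        by_contra h'
        exact hbD ⟨hb, h'⟩
      exact fun h' => hTsep b hbT a haD h'.symm
  · -- D = T
    have hD : ModOn G S T := by
      refine ⟨hTS, ?_⟩
      intro z hz
      right
      intro x hx
      exact fun h' => hTsep x hx z hz h'.symm
    have hsub := hmod _ hD hvT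
    obtain ⟨a, haT⟩ := hTne
    refine ⟨a, hTS haT, fun h => hvT (h ▸ haT), ?_⟩
    intro b hb hba
    by_cases hbT : b ∈ T
    · exact absurd (hsub hbT haT) hba
    · exact hTsep a haT b ⟨hb, hbT⟩
lemma extract_special_compl {G : SimpleGraph V} {S : Set V} {v : V} (hv : v ∈ S)
    (hmod : ∀ M, ModOn G S M → v ∉ M → M.Subsingleton)
    (hdisc : Disc Gᶜ S) :
    ∃ a ∈ S, a ≠ v ∧ ∀ b ∈ S, b ≠ a → G.Adj a b := by
  obtain ⟨T, hTS, hTne, hTne', hTsep⟩ := hdisc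
  have compl_not : ∀ p q : V, p ≠ q → ¬ Gᶜ.Adj p q → G.Adj p q := by
    intro p q hpq h'
    by_contra h''
    exact h' ⟨hpq, h''⟩
  by_cases hvT : v ∈ T
  · have hD : ModOn G S (S \ T) := by
      refine ⟨Set.diff_subset, ?_⟩
      intro z hz
      left
      intro x hx
      have hzT : z ∈ T := by
        rcases hz with ⟨hzS, hzD⟩
        by_contra h'
        exact hzD ⟨hzS, h'⟩
      exact compl_not z x (fun h => hz.2 (h ▸ hx)) (hTsep z hzT x hx)
    have hsub := hmod _ hD (fun h => h.2 hvT)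
    obtain ⟨a, haD⟩ := hTne'
    refine ⟨a, haD.1, fun h => haD.2 (h ▸ hvT), ?_⟩
    intro b hb hba
    by_cases hbD : b ∈ S \ T
    · exact absurd (hsub hbD haD) hba
    · have hbT : b ∈ T := by
        by_contra h'
        exact hbD ⟨hb, h'⟩
      exact (compl_not b a hba (hTsep b hbT a haD)).symm
  · have hD : ModOn G S T := by
      refine ⟨hTS, ?_⟩
      intro z hz
      left
      intro x hx
      exact (compl_not x z (fun h => hz.2 (h ▸ hx)) (hTsep x hx z hz)).symm
    have hsub := hmod _ hD hvT
    obtain ⟨a, haT⟩ := hTne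
    refine ⟨a, hTS haT, fun h => hvT (h ▸ haT), ?_⟩
    intro b hb hba
    by_cases hbT : b ∈ T
    · exact absurd (hsub hbT haT) hba
    · exact compl_not a b (Ne.symm hba) (hTsep a haT b ⟨hb, hbT⟩)

lemma buildEnum {G : SimpleGraph V} : ∀ n (S : Set V) (v : V), S.Finite → S.ncard = n →
    v ∈ S → NoP4 G S →
    (∀ M, ModOn G S M → v ∉ M → M.Subsingleton) →
    ∃ y : ℕ → V, Set.InjOn y (Set.Icc 1 n) ∧ y '' Set.Icc 1 n = S ∧ y n = v ∧
      ((∀ i j, 1 ≤ i → i < j → j ≤ n → (G.Adj (y i) (y j) ↔ Odd i)) ∨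
       (∀ i j, 1 ≤ i → i < j → j ≤ n → (G.Adj (y i) (y j) ↔ Even i))) := by
  intro n
  induction n using Nat.strong_induction_on with
  | _ n IH =>
    intro S v hfin hcard hv hP4 hmod
    rcases Nat.lt_or_ge n 2 with h2 | h2
    · -- n ≤ 1 ; since v ∈ S, n = 1 and S = {v}
      have hn1 : n = 1 := by
        rcases Nat.lt_or_ge n 1 with h | h
        · exfalso
          have : S = ∅ := by
            have := Set.ncard_eq_zero hfin |>.mp (by omega)
            exact this
          rw [this] at hv; exact hv
        · omega
      subst hn1
      obtain ⟨w, hw⟩ := Set.ncard_eq_one.mp hcard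
      have hvw : v = w := by rw [hw] at hv; exact hv
      refine ⟨fun _ => v, ?_, ?_, rfl, Or.inl ?_⟩
      · intro i hi j hj _; simp at hi hj; omega
      · apply Set.eq_of_subset_of_subset
        · rintro s ⟨i, _, rfl⟩
          rw [hw, ← hvw]; exact rfl
        · intro s hs
          refine ⟨1, by simp, ?_⟩
          rw [hw] at hs
          simp only [Set.mem_singleton_iff] at hs
          rw [hs, hvw]
      · intro i j hi hij hj; omega
    · -- n ≥ 2
      rcases seinsche_s10 n S hfin hcard h2 hP4 with hdisc | hdisc
      · -- isolated vertex case → Even pattern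
        obtain ⟨a, haS, hav, hiso⟩ := extract_special hv hmod hdisc
        set S' := S \ {a} with hS'def
        have hfin' : S'.Finite := hfin.subset Set.diff_subset
        have hcard' : S'.ncard = n - 1 := by
          rw [hS'def, Set.ncard_diff_singleton_of_mem haS, hcard]
        have hv' : v ∈ S' := ⟨hv, Ne.symm hav⟩
        have hmod' : ∀ M, ModOn G S' M → v ∉ M → M.Subsingleton := by
          intro M hM hvM
          apply hmod M _ hvM
          refine ⟨hM.1.trans Set.diff_subset, ?_⟩
          intro z hz
          by_cases hza : z = a
          · right
            intro x hx
            subst hza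
            exact hiso x (hM.1 hx).1 (fun h => (hM.1 hx).2 (by simp [h]))
          · exact hM.2 z ⟨⟨hz.1, hza⟩, hz.2⟩
        obtain ⟨y', hinj', himg', hlast', hpat'⟩ := IH (n-1) (by omega) S' v hfin' hcard'
          hv' (noP4_mono Set.diff_subset hP4) hmod'
        have haS' : a ∉ S' := fun h => h.2 rfl
        -- y' must have the Odd pattern
        have hodd : ∀ i j, 1 ≤ i → i < j → j ≤ n - 1 → (G.Adj (y' i) (y' j) ↔ Odd i) := by
          rcases Nat.lt_or_ge (n-1) 2 with h' | h'
          · intro i j hi hij hj; omega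
          rcases hpat' with h | h
          · exact h
          · exfalso
            have h1mem : (1:ℕ) ∈ Set.Icc 1 (n-1) := by simp; omega
            have hy1 : y' 1 ∈ S' := himg' ▸ ⟨1, h1mem, rfl⟩
            have hy1v : y' 1 ≠ v := by
              rw [← hlast']
              intro he
              have := hinj' h1mem (by simp; omega) he
              omega
            have hMmod : ModOn G S {a, y' 1} := by
              constructor
              · rintro x (rfl | rfl)
                · exact haS
                · exact hy1.1
              · intro z hz
                right
                have hza : z ≠ a := fun h => hz.2 (h ▸ (by simp))
                have hzy1 : z ≠ y' 1 := fun h => hz.2 (h ▸ (by simp))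
                rintro x (rfl | rfl)
                · exact fun h' => hiso z hz.1 hza h'.symm
                · -- z ∈ S', z = y' j for some j ≥ 2
                  have hzS' : z ∈ S' := ⟨hz.1, hza⟩
                  obtain ⟨j, hj, hje⟩ := himg' ▸ hzS'
                  have hj1 : j ≠ 1 := fun h => hzy1 (by rw [← hje, h])
                  simp only [Set.mem_Icc] at hj
                  intro h'
                  have := (h 1 j (by omega) (by omega) (by omega)).mp
                    (by rw [hje]; exact h'.symm)
                  simp at this
            have := hmod _ hMmod (by
              rintro (h | h)
              · exact hav h.symm
              · exact hy1v h.symm)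
            have : a = y' 1 := this (by simp) (by simp)
            exact haS' (this ▸ hy1)
        -- assemble
        refine ⟨fun i => if i = 1 then a else y' (i - 1), ?_, ?_, ?_, Or.inr ?_⟩
        · intro i hi j hj hij
          dsimp only at hij
          simp only [Set.mem_Icc] at hi hj
          by_cases hi1 : i = 1 <;> by_cases hj1 : j = 1
          · omega
          · exfalso
            have hmem : y' (j-1) ∈ S' := himg' ▸ ⟨j-1, by simp; omega, rfl⟩
            rw [if_pos hi1, if_neg hj1] at hij
            rw [← hij] at hmem
            exact haS' hmem
          · exfalso
            have hmem : y' (i-1) ∈ S' := himg' ▸ ⟨i-1, by simp; omega, rfl⟩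
            rw [if_neg hi1, if_pos hj1] at hij
            rw [hij] at hmem
            exact haS' hmem
          · rw [if_neg hi1, if_neg hj1] at hij
            have := hinj' (show i-1 ∈ Set.Icc 1 (n-1) by simp; omega)
              (show j-1 ∈ Set.Icc 1 (n-1) by simp; omega) hij
            omega
        · ext s
          simp only [Set.mem_image, Set.mem_Icc]
          constructor
          · rintro ⟨i, hi, rfl⟩
            by_cases hi1 : i = 1
            · simp [hi1]; exact haS
            · simp only [hi1, if_false]
              have : y' (i-1) ∈ S' := himg' ▸ ⟨i-1, by simp; omega, rfl⟩
              exact this.1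
          · intro hs
            by_cases hsa : s = a
            · exact ⟨1, by omega, by simp [hsa]⟩
            · obtain ⟨j, hj, hje⟩ := himg' ▸ (show s ∈ S' from ⟨hs, hsa⟩)
              simp only [Set.mem_Icc] at hj
              exact ⟨j + 1, by omega, by simp only [show j + 1 ≠ 1 by omega, if_false, Nat.add_sub_cancel]; exact hje⟩
        · simp only [show n ≠ 1 by omega, if_false]
          exact hlast'
        · intro i j hi hij hj
          by_cases hi1 : i = 1
          · subst hi1
            simp only [if_pos rfl, show j ≠ 1 by omega, if_false]
            have hyj : y' (j-1) ∈ S' := himg' ▸ ⟨j-1, by simp; omega, rfl⟩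
            constructor
            · intro h'
              exact absurd h' (hiso _ hyj.1 (fun h => haS' (h ▸ hyj)))
            · intro h'
              exact absurd h' (by decide)
          · simp only [hi1, if_false, show j ≠ 1 by omega, if_false]
            rw [hodd (i-1) (j-1) (by omega) (by omega) (by omega)]
            rw [Nat.odd_iff, Nat.even_iff]
            omega
      · -- dominating vertex case → Odd pattern
        obtain ⟨a, haS, hav, hdom⟩ := extract_special_compl hv hmod hdisc
        set S' := S \ {a} with hS'def
        have hfin' : S'.Finite := hfin.subset Set.diff_subset
        have hcard' : S'.ncard = n - 1 := by
          rw [hS'def, Set.ncard_diff_singleton_of_mem haS, hcard]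
        have hv' : v ∈ S' := ⟨hv, Ne.symm hav⟩
        have hmod' : ∀ M, ModOn G S' M → v ∉ M → M.Subsingleton := by
          intro M hM hvM
          apply hmod M _ hvM
          refine ⟨hM.1.trans Set.diff_subset, ?_⟩
          intro z hz
          by_cases hza : z = a
          · left
            intro x hx
            subst hza
            exact hdom x (hM.1 hx).1 (fun h => (hM.1 hx).2 (by simp [h]))
          · exact hM.2 z ⟨⟨hz.1, hza⟩, hz.2⟩
        obtain ⟨y', hinj', himg', hlast', hpat'⟩ := IH (n-1) (by omega) S' v hfin' hcard'
          hv' (noP4_mono Set.diff_subset hP4) hmod'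
        have haS' : a ∉ S' := fun h => h.2 rfl
        have heven : ∀ i j, 1 ≤ i → i < j → j ≤ n - 1 → (G.Adj (y' i) (y' j) ↔ Even i) := by
          rcases Nat.lt_or_ge (n-1) 2 with h' | h'
          · intro i j hi hij hj; omega
          rcases hpat' with h | h
          · exfalso
            have h1mem : (1:ℕ) ∈ Set.Icc 1 (n-1) := by simp; omega
            have hy1 : y' 1 ∈ S' := himg' ▸ ⟨1, h1mem, rfl⟩
            have hy1v : y' 1 ≠ v := by
              rw [← hlast']
              intro he
              have := hinj' h1mem (by simp; omega) he
              omega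
            have hMmod : ModOn G S {a, y' 1} := by
              constructor
              · rintro x (rfl | rfl)
                · exact haS
                · exact hy1.1
              · intro z hz
                left
                have hza : z ≠ a := fun h => hz.2 (h ▸ (by simp))
                have hzy1 : z ≠ y' 1 := fun h => hz.2 (h ▸ (by simp))
                rintro x (rfl | rfl)
                · exact (hdom z hz.1 hza).symm
                · have hzS' : z ∈ S' := ⟨hz.1, hza⟩
                  obtain ⟨j, hj, hje⟩ := himg' ▸ hzS'
                  have hj1 : j ≠ 1 := fun h => hzy1 (by rw [← hje, h])
                  simp only [Set.mem_Icc] at hj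
                  have := (h 1 j (by omega) (by omega) (by omega)).mpr (by decide)
                  rw [hje] at this
                  exact this.symm
            have := hmod _ hMmod (by
              rintro (h | h)
              · exact hav h.symm
              · exact hy1v h.symm)
            have : a = y' 1 := this (by simp) (by simp)
            exact haS' (this ▸ hy1)
          · exact h
        refine ⟨fun i => if i = 1 then a else y' (i - 1), ?_, ?_, ?_, Or.inl ?_⟩
        · intro i hi j hj hij
          dsimp only at hij
          simp only [Set.mem_Icc] at hi hj
          by_cases hi1 : i = 1 <;> by_cases hj1 : j = 1
          · omega
          · exfalso
            have hmem : y' (j-1) ∈ S' := himg' ▸ ⟨j-1, by simp; omega, rfl⟩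
            rw [if_pos hi1, if_neg hj1] at hij
            rw [← hij] at hmem
            exact haS' hmem
          · exfalso
            have hmem : y' (i-1) ∈ S' := himg' ▸ ⟨i-1, by simp; omega, rfl⟩
            rw [if_neg hi1, if_pos hj1] at hij
            rw [hij] at hmem
            exact haS' hmem
          · rw [if_neg hi1, if_neg hj1] at hij
            have := hinj' (show i-1 ∈ Set.Icc 1 (n-1) by simp; omega)
              (show j-1 ∈ Set.Icc 1 (n-1) by simp; omega) hij
            omega
        · ext s
          simp only [Set.mem_image, Set.mem_Icc]
          constructor
          · rintro ⟨i, hi, rfl⟩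
            by_cases hi1 : i = 1
            · simp [hi1]; exact haS
            · simp only [hi1, if_false]
              have : y' (i-1) ∈ S' := himg' ▸ ⟨i-1, by simp; omega, rfl⟩
              exact this.1
          · intro hs
            by_cases hsa : s = a
            · exact ⟨1, by omega, by simp [hsa]⟩
            · obtain ⟨j, hj, hje⟩ := himg' ▸ (show s ∈ S' from ⟨hs, hsa⟩)
              simp only [Set.mem_Icc] at hj
              exact ⟨j + 1, by omega, by simp only [show j + 1 ≠ 1 by omega, if_false, Nat.add_sub_cancel]; exact hje⟩
        · simp only [show n ≠ 1 by omega, if_false]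
          exact hlast'
        · intro i j hi hij hj
          by_cases hi1 : i = 1
          · subst hi1
            simp only [if_pos rfl, show j ≠ 1 by omega, if_false]
            have hyj : y' (j-1) ∈ S' := himg' ▸ ⟨j-1, by simp; omega, rfl⟩
            constructor
            · intro _; decide
            · intro _
              exact hdom _ hyj.1 (fun h => haS' (h ▸ hyj))
          · simp only [hi1, if_false, show j ≠ 1 by omega, if_false]
            rw [heven (i-1) (j-1) (by omega) (by omega) (by omega)]
            rw [Nat.odd_iff, Nat.even_iff]
            omega

lemma climb {G : SimpleGraph V} {y : ℕ → V} {ℓ : ℕ} {M : Set V}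
    (hpy : ∀ i j, 1 ≤ i → i < j → j ≤ ℓ → (G.Adj (y i) (y j) ↔ Odd i))
    (habs : ∀ c a b, a ∈ M → b ∈ M → G.Adj c a → ¬ G.Adj c b → c ∈ M)
    {i j : ℕ} (hi : 1 ≤ i) (hij : i < j) (hj : j ≤ ℓ)
    (hyi : y i ∈ M) (hyj : y j ∈ M) :
    ∀ t, i ≤ t → t ≤ ℓ → y t ∈ M := by
  have step1 : y (i+1) ∈ M := by
    by_cases hji : j = i + 1
    · exact hji ▸ hyj
    · have hij1 : i + 1 < j := by omega
      by_cases hoi : Odd i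
      · -- y (i+1) adjacent to y i, not to y j
        refine habs (y (i+1)) (y i) (y j) hyi hyj
          (G.adj_symm ((hpy i (i+1) hi (by omega) (by omega)).mpr hoi)) ?_
        intro h'
        have := (hpy (i+1) j (by omega) hij1 hj).mp h'
        simp [Nat.odd_iff, Nat.even_iff] at this hoi
        omega
      · refine habs (y (i+1)) (y j) (y i) hyj hyi
          ((hpy (i+1) j (by omega) hij1 hj).mpr ?_) ?_
        · simp [Nat.odd_iff, Nat.even_iff] at hoi ⊢
          omega
        · intro h'
          exact hoi ((hpy i (i+1) hi (by omega) (by omega)).mp (G.adj_symm h'))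
  have pairstep : ∀ d, i + d + 1 ≤ ℓ → y (i + d) ∈ M ∧ y (i + d + 1) ∈ M := by
    intro d
    induction d with
    | zero => intro _; exact ⟨hyi, step1⟩
    | succ d IHd =>
      intro hd
      obtain ⟨h1, h2⟩ := IHd (by omega)
      refine ⟨h2, ?_⟩
      have harith : i + (d+1) + 1 = (i + d) + 2 := by omega
      by_cases ho : Odd (i + d)
      · refine habs (y (i + (d+1) + 1)) (y (i+d)) (y (i+d+1)) h1 h2
          (G.adj_symm ((hpy (i+d) (i+(d+1)+1) (by omega) (by omega) (by omega)).mpr ho)) ?_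
        intro h'
        have := (hpy (i+d+1) (i+(d+1)+1) (by omega) (by omega) (by omega)).mp (G.adj_symm h')
        simp [Nat.odd_iff, Nat.even_iff] at this ho
        omega
      · refine habs (y (i + (d+1) + 1)) (y (i+d+1)) (y (i+d)) h2 h1
          (G.adj_symm ((hpy (i+d+1) (i+(d+1)+1) (by omega) (by omega) (by omega)).mpr ?_)) ?_
        · simp [Nat.odd_iff, Nat.even_iff] at ho ⊢
          omega
        · intro h'
          exact ho ((hpy (i+d) (i+(d+1)+1) (by omega) (by omega) (by omega)).mp (G.adj_symm h'))
  intro t hit htl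
  rcases Nat.eq_or_lt_of_le hit with rfl | hlt
  · exact hyi
  · have : t = i + (t - i - 1) + 1 := by omega
    rw [this]
    exact (pairstep (t - i - 1) (by omega)).2

lemma primitivity_caseA {G : SimpleGraph V} {v : V} {ℓ m : ℕ} {y z : ℕ → V}
    (hl : 2 ≤ ℓ) (hm : 2 ≤ m)
    (hyinj : Set.InjOn y (Set.Icc 1 ℓ)) (hzinj : Set.InjOn z (Set.Icc 1 m))
    (hyl : y ℓ = v) (hzm : z m = v)
    (hunion : (y '' Set.Icc 1 ℓ) ∪ (z '' Set.Icc 1 m) = Set.univ)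
    (hpy : ∀ i j, 1 ≤ i → i < j → j ≤ ℓ → (G.Adj (y i) (y j) ↔ Odd i))
    (hpz : ∀ i j, 1 ≤ i → i < j → j ≤ m → (G.Adj (z i) (z j) ↔ Odd i))
    (hcross : ∀ i j, 1 ≤ i → i < ℓ → 1 ≤ j → j < m → ¬ G.Adj (y i) (z j))
    (hcard : 4 ≤ Nat.card V)
    {M : Set V} (hM : ∀ w ∉ M, (∀ x ∈ M, G.Adj w x) ∨ (∀ x ∈ M, ¬ G.Adj w x)) :
    M = ∅ ∨ (∃ x, M = {x}) ∨ M = Set.univ := by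
  have habs : ∀ c a b, a ∈ M → b ∈ M → G.Adj c a → ¬ G.Adj c b → c ∈ M := by
    intro c a b haM hbM hca hcb
    by_contra hc
    rcases hM c hc with h | h
    · exact hcb (h b hbM)
    · exact h a haM hca
  -- same-side absorption
  have sameY : ∀ i j, 1 ≤ i → i < j → j ≤ ℓ → y i ∈ M → y j ∈ M → M = Set.univ := by
    intro i j hi hij hj hyi hyj
    have hYall : ∀ t, i ≤ t → t ≤ ℓ → y t ∈ M := climb hpy habs hi hij hj hyi hyj
    have hvM : v ∈ M := hyl ▸ hYall ℓ (by omega) (le_refl _)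
    have hylM : y (ℓ-1) ∈ M := hYall (ℓ-1) (by omega) (by omega)
    have hz1M : z 1 ∈ M := by
      refine habs (z 1) v (y (ℓ-1)) hvM hylM ?_ ?_
      · rw [← hzm]
        exact (hpz 1 m (le_refl _) (by omega) (le_refl _)).mpr (by decide)
      · intro h'
        exact hcross (ℓ-1) 1 (by omega) (by omega) (by omega) (by omega) (G.adj_symm h')
    have hZall : ∀ t, 1 ≤ t → t ≤ m → z t ∈ M :=
      climb hpz habs (le_refl _) (by omega) (le_refl _) hz1M (hzm ▸ hvM)
    have hy1M : y 1 ∈ M := by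
      refine habs (y 1) v (z 1) hvM hz1M ?_ ?_
      · rw [← hyl]
        exact (hpy 1 ℓ (le_refl _) (by omega) (le_refl _)).mpr (by decide)
      · exact hcross 1 1 (le_refl _) (by omega) (le_refl _) (by omega)
    have hYall' : ∀ t, 1 ≤ t → t ≤ ℓ → y t ∈ M :=
      climb hpy habs (le_refl _) (by omega) (le_refl _) hy1M (hyl ▸ hvM)
    apply Set.eq_univ_of_univ_subset
    intro w _
    have hw : w ∈ (y '' Set.Icc 1 ℓ) ∪ (z '' Set.Icc 1 m) := hunion ▸ Set.mem_univ w
    rcases hw with ⟨t, ht, rfl⟩ | ⟨t, ht, rfl⟩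
    · simp only [Set.mem_Icc] at ht
      exact hYall' t ht.1 ht.2
    · simp only [Set.mem_Icc] at ht
      exact hZall t ht.1 ht.2
  have sameZ : ∀ i j, 1 ≤ i → i < j → j ≤ m → z i ∈ M → z j ∈ M → M = Set.univ := by
    intro i j hi hij hj hzi hzj
    have hZall : ∀ t, i ≤ t → t ≤ m → z t ∈ M := climb hpz habs hi hij hj hzi hzj
    have hvM : v ∈ M := hzm ▸ hZall m (by omega) (le_refl _)
    have hzlM : z (m-1) ∈ M := hZall (m-1) (by omega) (by omega)
    have hy1M : y 1 ∈ M := by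
      refine habs (y 1) v (z (m-1)) hvM hzlM ?_ ?_
      · rw [← hyl]
        exact (hpy 1 ℓ (le_refl _) (by omega) (le_refl _)).mpr (by decide)
      · exact hcross 1 (m-1) (le_refl _) (by omega) (by omega) (by omega)
    have hYall : ∀ t, 1 ≤ t → t ≤ ℓ → y t ∈ M :=
      climb hpy habs (le_refl _) (by omega) (le_refl _) hy1M (hyl ▸ hvM)
    have hz1M : z 1 ∈ M := by
      refine habs (z 1) v (y 1) hvM hy1M ?_ ?_
      · rw [← hzm]
        exact (hpz 1 m (le_refl _) (by omega) (le_refl _)).mpr (by decide)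
      · intro h'
        exact hcross 1 1 (le_refl _) (by omega) (le_refl _) (by omega) (G.adj_symm h')
    have hZall' : ∀ t, 1 ≤ t → t ≤ m → z t ∈ M :=
      climb hpz habs (le_refl _) (by omega) (le_refl _) hz1M (hzm ▸ hvM)
    apply Set.eq_univ_of_univ_subset
    intro w _
    have hw : w ∈ (y '' Set.Icc 1 ℓ) ∪ (z '' Set.Icc 1 m) := hunion ▸ Set.mem_univ w
    rcases hw with ⟨t, ht, rfl⟩ | ⟨t, ht, rfl⟩
    · simp only [Set.mem_Icc] at ht
      exact hYall t ht.1 ht.2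
    · simp only [Set.mem_Icc] at ht
      exact hZall' t ht.1 ht.2
  -- main case analysis
  by_cases hMempty : M = ∅
  · exact Or.inl hMempty
  by_cases hMsub : M.Subsingleton
  · right; left
    obtain ⟨x, hx⟩ := Set.nonempty_iff_ne_empty.mpr hMempty
    exact ⟨x, Set.eq_singleton_iff_unique_mem.mpr ⟨hx, fun b hb => hMsub hb hx⟩⟩
  · right; right
    rw [Set.not_subsingleton_iff] at hMsub
    obtain ⟨a, haM, b, hbM, hab⟩ := hMsub
    have mixed : ∀ a b, a ∈ M → b ∈ M →
        a ∈ y '' Set.Icc 1 ℓ → a ∉ z '' Set.Icc 1 m →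
        b ∈ z '' Set.Icc 1 m → b ∉ y '' Set.Icc 1 ℓ → M = Set.univ := by
      intro a b haM hbM haY haZ hbZ hbY
      obtain ⟨i, hi, rfl⟩ := haY
      obtain ⟨j, hj, rfl⟩ := hbZ
      simp only [Set.mem_Icc] at hi hj
      have hanv : i ≠ ℓ := by
        intro h
        exact haZ ⟨m, by simp; omega, by rw [hzm, h]; exact hyl.symm⟩
      have hbnv : j ≠ m := by
        intro h
        exact hbY ⟨ℓ, by simp; omega, by rw [hyl, h]; exact hzm.symm⟩
      by_cases hi1 : i = 1
      · by_cases hj1 : j = 1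
        · subst hi1; subst hj1
          rcases Nat.lt_or_ge ℓ 3 with hl3 | hl3
          · rcases Nat.lt_or_ge m 3 with hm3 | hm3
            · -- ℓ = m = 2 : contradiction with |V| ≥ 4
              exfalso
              have hl2 : ℓ = 2 := by omega
              have hm2 : m = 2 := by omega
              have hsub : (Set.univ : Set V) ⊆ {y 1, y 2, z 1} := by
                intro w _
                have hw : w ∈ (y '' Set.Icc 1 ℓ) ∪ (z '' Set.Icc 1 m) :=
                  hunion ▸ Set.mem_univ w
                rcases hw with ⟨t, ht, rfl⟩ | ⟨t, ht, rfl⟩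
                · simp only [Set.mem_Icc, hl2] at ht
                  obtain ⟨ht1, ht2⟩ := ht
                  interval_cases t <;> simp
                · simp only [Set.mem_Icc, hm2] at ht
                  obtain ⟨ht1, ht2⟩ := ht
                  have h1 : z 2 = v := hm2 ▸ hzm
                  have h2 : y 2 = v := hl2 ▸ hyl
                  interval_cases t
                  · simp
                  · right; left; exact h1.trans h2.symm
              have hcard3 : Nat.card V ≤ 3 := by
                rw [← Set.ncard_univ]
                calc (Set.univ : Set V).ncard ≤ ({y 1, y 2, z 1} : Set V).ncard :=
                    Set.ncard_le_ncard hsub (Set.toFinite _)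
                  _ ≤ 3 := by
                    apply le_trans (Set.ncard_insert_le _ _)
                    have := Set.ncard_insert_le (y 2) ({z 1} : Set V)
                    simp at this ⊢
                    omega
              omega
            · -- m ≥ 3 : use z 2
              have hz2M : z 2 ∈ M := by
                refine habs (z 2) (z 1) (y 1) hbM haM
                  (G.adj_symm ((hpz 1 2 (le_refl _) (by omega) (by omega)).mpr (by decide))) ?_
                intro h'
                exact hcross 1 2 (le_refl _) (by omega) (by omega) (by omega) (G.adj_symm h')
              exact sameZ 1 2 (le_refl _) (by omega) (by omega) hbM hz2M
          · -- ℓ ≥ 3 : use y 2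
            have hy2M : y 2 ∈ M := by
              refine habs (y 2) (y 1) (z 1) haM hbM
                (G.adj_symm ((hpy 1 2 (le_refl _) (by omega) (by omega)).mpr (by decide))) ?_
              exact hcross 2 1 (by omega) (by omega) (le_refl _) (by omega)
            exact sameY 1 2 (le_refl _) (by omega) (by omega) haM hy2M
        · -- j ≠ 1 : z 1 ∈ M
          have hz1M : z 1 ∈ M := by
            refine habs (z 1) (z j) (y i) hbM haM
              ((hpz 1 j (le_refl _) (by omega) (by omega)).mpr (by decide)) ?_
            intro h'
            exact hcross i 1 (by omega) (by omega) (le_refl _) (by omega) (G.adj_symm h')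
          exact sameZ 1 j (le_refl _) (by omega) (by omega) hz1M hbM
      · -- i ≠ 1 : y 1 ∈ M
        have hy1M : y 1 ∈ M := by
          refine habs (y 1) (y i) (z j) haM hbM
            ((hpy 1 i (le_refl _) (by omega) (by omega)).mpr (by decide)) ?_
          exact hcross 1 j (le_refl _) (by omega) (by omega) (by omega)
        exact sameY 1 i (le_refl _) (by omega) (by omega) hy1M haM
    -- now decide where a and b live
    by_cases haY : a ∈ y '' Set.Icc 1 ℓ
    · by_cases hbY : b ∈ y '' Set.Icc 1 ℓ
      · obtain ⟨i, hi, rfl⟩ := haY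
        obtain ⟨j, hj, rfl⟩ := hbY
        simp only [Set.mem_Icc] at hi hj
        have hij : i ≠ j := fun h => hab (h ▸ rfl)
        rcases Nat.lt_or_ge i j with h | h
        · exact sameY i j hi.1 h hj.2 haM hbM
        · exact sameY j i hj.1 (by omega) hi.2 hbM haM
      · have hbZ : b ∈ z '' Set.Icc 1 m := by
          have := hunion ▸ Set.mem_univ b
          rcases this with h | h
          · exact absurd h hbY
          · exact h
        by_cases haZ : a ∈ z '' Set.Icc 1 m
        · obtain ⟨i, hi, rfl⟩ := haZ
          obtain ⟨j, hj, rfl⟩ := hbZ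
          simp only [Set.mem_Icc] at hi hj
          have hij : i ≠ j := fun h => hab (h ▸ rfl)
          rcases Nat.lt_or_ge i j with h | h
          · exact sameZ i j hi.1 h hj.2 haM hbM
          · exact sameZ j i hj.1 (by omega) hi.2 hbM haM
        · exact mixed a b haM hbM haY haZ hbZ hbY
    · have haZ : a ∈ z '' Set.Icc 1 m := by
        have := hunion ▸ Set.mem_univ a
        rcases this with h | h
        · exact absurd h haY
        · exact h
      by_cases hbZ : b ∈ z '' Set.Icc 1 m
      · obtain ⟨i, hi, rfl⟩ := haZ
        obtain ⟨j, hj, rfl⟩ := hbZ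
        simp only [Set.mem_Icc] at hi hj
        have hij : i ≠ j := fun h => hab (h ▸ rfl)
        rcases Nat.lt_or_ge i j with h | h
        · exact sameZ i j hi.1 h hj.2 haM hbM
        · exact sameZ j i hj.1 (by omega) hi.2 hbM haM
      · have hbY : b ∈ y '' Set.Icc 1 ℓ := by
          have := hunion ▸ Set.mem_univ b
          rcases this with h | h
          · exact h
          · exact absurd h hbZ
        exact mixed b a hbM haM hbY hbZ haZ haY

lemma pairSet_eq' {s t u w : V} (h : ({s, t} : Set V) = {u, w}) :
    (s = u ∧ t = w) ∨ (s = w ∧ t = u) := by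
  have hs : s ∈ ({u, w} : Set V) := by rw [← h]; simp
  have ht : t ∈ ({u, w} : Set V) := by rw [← h]; simp
  have hw : w ∈ ({s, t} : Set V) := by rw [h]; simp
  have hu : u ∈ ({s, t} : Set V) := by rw [h]; simp
  simp only [Set.mem_insert_iff, Set.mem_singleton_iff] at hs ht hu hw
  rcases hs with hs | hs <;> rcases ht with ht | ht <;> tauto

lemma connected_of_hub {G : SimpleGraph V} {y : ℕ → V} {ℓ : ℕ} (hl : 2 ≤ ℓ)
    (hadj : ∀ j, 1 < j → j ≤ ℓ → G.Adj (y 1) (y j)) :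
    (G.induce (y '' Set.Icc 1 ℓ)).Connected := by
  have h1 : y 1 ∈ y '' Set.Icc 1 ℓ := ⟨1, by simp; omega, rfl⟩
  rw [SimpleGraph.connected_iff]
  refine ⟨?_, ⟨⟨y 1, h1⟩⟩⟩
  have hub : ∀ u : ↥(y '' Set.Icc 1 ℓ), (G.induce (y '' Set.Icc 1 ℓ)).Reachable ⟨y 1, h1⟩ u := by
    rintro ⟨u, hu⟩
    by_cases h : u = y 1
    · subst h; exact SimpleGraph.Reachable.refl _
    · obtain ⟨j, hj, rfl⟩ := hu
      simp only [Set.mem_Icc] at hj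
      have hj1 : 1 < j := by
        rcases Nat.lt_or_ge 1 j with h' | h'
        · exact h'
        · exfalso; apply h; congr 1; omega
      exact SimpleGraph.Adj.reachable (by exact hadj j hj1 hj.2)
  intro u w
  exact (hub u).symm.trans (hub w)

lemma exists_adj_of_reachable {W : Type} {H : SimpleGraph W} {u w : W}
    (h : H.Reachable u w) (hne : u ≠ w) : ∃ x, H.Adj u x := by
  obtain ⟨p⟩ := h
  cases p with
  | nil => exact absurd rfl hne
  | cons h _ => exact ⟨_, h⟩

lemma not_connected_of_isolated {G : SimpleGraph V} {y : ℕ → V} {ℓ : ℕ} (hl : 2 ≤ ℓ)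
    (hyinj : Set.InjOn y (Set.Icc 1 ℓ))
    (hnadj : ∀ j, 1 < j → j ≤ ℓ → ¬ G.Adj (y 1) (y j)) :
    ¬ (G.induce (y '' Set.Icc 1 ℓ)).Connected := by
  intro hconn
  have h1 : y 1 ∈ y '' Set.Icc 1 ℓ := ⟨1, by simp; omega, rfl⟩
  have hL : y ℓ ∈ y '' Set.Icc 1 ℓ := ⟨ℓ, by simp; omega, rfl⟩
  have hne : (⟨y 1, h1⟩ : ↥(y '' Set.Icc 1 ℓ)) ≠ ⟨y ℓ, hL⟩ := by
    intro h
    have := congrArg Subtype.val h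
    have := hyinj (by simp; omega) (by simp; omega) this
    omega
  obtain ⟨x, hadj⟩ := exists_adj_of_reachable (hconn.preconnected ⟨y 1, h1⟩ ⟨y ℓ, hL⟩) hne
  obtain ⟨j, hj, hje⟩ := x.2
  simp only [Set.mem_Icc] at hj
  have hadj' : G.Adj (y 1) x.1 := hadj
  by_cases hj1 : j = 1
  · rw [← hje, hj1] at hadj'
    exact G.loopless.irrefl _ hadj'
  · rw [← hje] at hadj'
    exact hnadj j (by omega) hj.2 hadj'

section PatExtract
variable {G : SimpleGraph V} {v : V} {ℓ m : ℕ} {y z : ℕ → V}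

/-- Extract the within-Y pattern from the case (a) edge characterization. -/
lemma patY_of_charA (hyinj : Set.InjOn y (Set.Icc 1 ℓ))
    (hinter : (y '' Set.Icc 1 ℓ) ∩ (z '' Set.Icc 1 m) = {v}) (p : ℕ → Prop)
    (hchar : ∀ a b, G.Adj a b ↔
      ((∃ i j, 1 ≤ i ∧ i < j ∧ j ≤ ℓ ∧ p i ∧ ({a, b} : Set V) = {y i, y j}) ∨
       (∃ i j, 1 ≤ i ∧ i < j ∧ j ≤ m ∧ p i ∧ ({a, b} : Set V) = {z i, z j}))) :
    ∀ i j, 1 ≤ i → i < j → j ≤ ℓ → (G.Adj (y i) (y j) ↔ p i) := by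
  intro i j hi hij hj
  constructor
  · intro hadj
    rcases (hchar _ _).mp hadj with ⟨i', j', hi', hij', hj', hp', heq⟩ |
      ⟨i', j', hi', hij', hj', hp', heq⟩
    · rcases pairSet_eq' heq with ⟨h1, h2⟩ | ⟨h1, h2⟩
      · have e1 : i = i' := hyinj (by simp; omega) (by simp; omega) h1
        exact e1 ▸ hp'
      · have e1 : i = j' := hyinj (by simp; omega) (by simp; omega) h1
        have e2 : j = i' := hyinj (by simp; omega) (by simp; omega) h2
        omega
    · exfalso
      have hyi : y i ∈ ({z i', z j'} : Set V) := by rw [← heq]; simp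
      have hyj : y j ∈ ({z i', z j'} : Set V) := by rw [← heq]; simp
      have hyiv : y i = v := by
        have : y i ∈ (y '' Set.Icc 1 ℓ) ∩ (z '' Set.Icc 1 m) := by
          refine ⟨⟨i, by simp; omega, rfl⟩, ?_⟩
          rcases hyi with h | h
          · exact ⟨i', by simp; omega, h.symm⟩
          · exact ⟨j', by simp; omega, h.symm⟩
        rw [hinter] at this; exact this
      have hyjv : y j = v := by
        have : y j ∈ (y '' Set.Icc 1 ℓ) ∩ (z '' Set.Icc 1 m) := by
          refine ⟨⟨j, by simp; omega, rfl⟩, ?_⟩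
          rcases hyj with h | h
          · exact ⟨i', by simp; omega, h.symm⟩
          · exact ⟨j', by simp; omega, h.symm⟩
        rw [hinter] at this; exact this
      have : i = j := hyinj (by simp; omega) (by simp; omega) (hyiv.trans hyjv.symm)
      omega
  · intro hp
    exact (hchar _ _).mpr (Or.inl ⟨i, j, hi, hij, hj, hp, rfl⟩)

/-- Extract the cross-nonedges from the case (a) edge characterization. -/
lemma crossNone_of_charA (hyinj : Set.InjOn y (Set.Icc 1 ℓ))
    (hzinj : Set.InjOn z (Set.Icc 1 m)) (hyl : y ℓ = v) (hzm : z m = v)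
    (hinter : (y '' Set.Icc 1 ℓ) ∩ (z '' Set.Icc 1 m) = {v}) (p : ℕ → Prop)
    (hchar : ∀ a b, G.Adj a b ↔
      ((∃ i j, 1 ≤ i ∧ i < j ∧ j ≤ ℓ ∧ p i ∧ ({a, b} : Set V) = {y i, y j}) ∨
       (∃ i j, 1 ≤ i ∧ i < j ∧ j ≤ m ∧ p i ∧ ({a, b} : Set V) = {z i, z j}))) :
    ∀ i j, 1 ≤ i → i < ℓ → 1 ≤ j → j < m → ¬ G.Adj (y i) (z j) := by
  intro i j hi hil hj hjm hadj
  rcases (hchar _ _).mp hadj with ⟨i', j', hi', hij', hj', hp', heq⟩ |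
    ⟨i', j', hi', hij', hj', hp', heq⟩
  · -- z j would be in the Y image
    have hzj : z j ∈ ({y i', y j'} : Set V) := by rw [← heq]; simp
    have : z j ∈ (y '' Set.Icc 1 ℓ) ∩ (z '' Set.Icc 1 m) := by
      refine ⟨?_, ⟨j, by simp; omega, rfl⟩⟩
      rcases hzj with h | h
      · exact ⟨i', by simp; omega, h.symm⟩
      · exact ⟨j', by simp; omega, h.symm⟩
    rw [hinter] at this
    have : j = m := hzinj (by simp; omega) (by simp; omega) (this.trans hzm.symm)
    omega
  · have hyi : y i ∈ ({z i', z j'} : Set V) := by rw [← heq]; simp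
    have : y i ∈ (y '' Set.Icc 1 ℓ) ∩ (z '' Set.Icc 1 m) := by
      refine ⟨⟨i, by simp; omega, rfl⟩, ?_⟩
      rcases hyi with h | h
      · exact ⟨i', by simp; omega, h.symm⟩
      · exact ⟨j', by simp; omega, h.symm⟩
    rw [hinter] at this
    have : i = ℓ := hyinj (by simp; omega) (by simp; omega) (this.trans hyl.symm)
    omega

/-- Extract the within-Y pattern from the case (b) edge characterization. -/
lemma patY_of_charB (hyinj : Set.InjOn y (Set.Icc 1 ℓ))
    (hzinj : Set.InjOn z (Set.Icc 1 m)) (hzm : z m = v)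
    (hinter : (y '' Set.Icc 1 ℓ) ∩ (z '' Set.Icc 1 m) = {v}) (p : ℕ → Prop)
    (hchar : ∀ a b, G.Adj a b ↔
      ((∃ i j, 1 ≤ i ∧ i < j ∧ j ≤ ℓ ∧ p i ∧ ({a, b} : Set V) = {y i, y j}) ∨
       (∃ i j, 1 ≤ i ∧ i < j ∧ j ≤ m ∧ p i ∧ ({a, b} : Set V) = {z i, z j}) ∨
       (∃ i j, 1 ≤ i ∧ i < ℓ ∧ 1 ≤ j ∧ j < m ∧ ({a, b} : Set V) = {y i, z j}))) :
    ∀ i j, 1 ≤ i → i < j → j ≤ ℓ → (G.Adj (y i) (y j) ↔ p i) := by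
  intro i j hi hij hj
  constructor
  · intro hadj
    rcases (hchar _ _).mp hadj with ⟨i', j', hi', hij', hj', hp', heq⟩ |
      ⟨i', j', hi', hij', hj', hp', heq⟩ | ⟨i', j', hi', hil', hj', hjm', heq⟩
    · rcases pairSet_eq' heq with ⟨h1, h2⟩ | ⟨h1, h2⟩
      · have e1 : i = i' := hyinj (by simp; omega) (by simp; omega) h1
        exact e1 ▸ hp'
      · have e1 : i = j' := hyinj (by simp; omega) (by simp; omega) h1
        have e2 : j = i' := hyinj (by simp; omega) (by simp; omega) h2
        omega
    · exfalso
      have hyi : y i ∈ ({z i', z j'} : Set V) := by rw [← heq]; simp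
      have hyj : y j ∈ ({z i', z j'} : Set V) := by rw [← heq]; simp
      have hyiv : y i = v := by
        have : y i ∈ (y '' Set.Icc 1 ℓ) ∩ (z '' Set.Icc 1 m) := by
          refine ⟨⟨i, by simp; omega, rfl⟩, ?_⟩
          rcases hyi with h | h
          · exact ⟨i', by simp; omega, h.symm⟩
          · exact ⟨j', by simp; omega, h.symm⟩
        rw [hinter] at this; exact this
      have hyjv : y j = v := by
        have : y j ∈ (y '' Set.Icc 1 ℓ) ∩ (z '' Set.Icc 1 m) := by
          refine ⟨⟨j, by simp; omega, rfl⟩, ?_⟩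
          rcases hyj with h | h
          · exact ⟨i', by simp; omega, h.symm⟩
          · exact ⟨j', by simp; omega, h.symm⟩
        rw [hinter] at this; exact this
      have : i = j := hyinj (by simp; omega) (by simp; omega) (hyiv.trans hyjv.symm)
      omega
    · exfalso
      -- z j' is in the Y image, so z j' = v = z m, contradiction with j' < m
      have hzj : z j' ∈ ({y i, y j} : Set V) := by rw [heq]; simp
      have : z j' ∈ (y '' Set.Icc 1 ℓ) ∩ (z '' Set.Icc 1 m) := by
        refine ⟨?_, ⟨j', by simp; omega, rfl⟩⟩
        rcases hzj with h | h
        · exact ⟨i, by simp; omega, h.symm⟩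
        · exact ⟨j, by simp; omega, h.symm⟩
      rw [hinter] at this
      have : j' = m := hzinj (by simp; omega) (by simp; omega) (this.trans hzm.symm)
      omega
  · intro hp
    exact (hchar _ _).mpr (Or.inl ⟨i, j, hi, hij, hj, hp, rfl⟩)

lemma crossAll_of_charB (p : ℕ → Prop)
    (hchar : ∀ a b, G.Adj a b ↔
      ((∃ i j, 1 ≤ i ∧ i < j ∧ j ≤ ℓ ∧ p i ∧ ({a, b} : Set V) = {y i, y j}) ∨
       (∃ i j, 1 ≤ i ∧ i < j ∧ j ≤ m ∧ p i ∧ ({a, b} : Set V) = {z i, z j}) ∨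
       (∃ i j, 1 ≤ i ∧ i < ℓ ∧ 1 ≤ j ∧ j < m ∧ ({a, b} : Set V) = {y i, z j}))) :
    ∀ i j, 1 ≤ i → i < ℓ → 1 ≤ j → j < m → G.Adj (y i) (z j) := by
  intro i j hi hil hj hjm
  exact (hchar _ _).mpr (Or.inr (Or.inr ⟨i, j, hi, hil, hj, hjm, rfl⟩))

end PatExtract

lemma min4 {p : ℕ → Prop} {a b c d : ℕ} (hab : a≠b) (hac : a≠c) (had : a≠d)
    (hbc : b≠c) (hbd : b≠d) (hcd : c≠d)
    (h1 : p (min a b)) (h2 : p (min b c)) (h3 : p (min c d))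
    (h4 : ¬ p (min a c)) (h5 : ¬ p (min a d)) (h6 : ¬ p (min b d)) : False := by
  have key : ∀ x y : ℕ, x ≠ y → (min x y = x ∧ x < y) ∨ (min x y = y ∧ y < x) := by
    intro x y h
    rcases Nat.lt_or_ge x y with h' | h'
    · left; exact ⟨min_eq_left h'.le, h'⟩
    · right; exact ⟨min_eq_right h', by omega⟩
  rcases key a b hab with ⟨e1,o1⟩|⟨e1,o1⟩ <;> rcases key b c hbc with ⟨e2,o2⟩|⟨e2,o2⟩ <;>
    rcases key c d hcd with ⟨e3,o3⟩|⟨e3,o3⟩ <;> rcases key a c hac with ⟨e4,o4⟩|⟨e4,o4⟩ <;>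
    rcases key a d had with ⟨e5,o5⟩|⟨e5,o5⟩ <;> rcases key b d hbd with ⟨e6,o6⟩|⟨e6,o6⟩ <;>
    rw [e1] at h1 <;> rw [e2] at h2 <;> rw [e3] at h3 <;> rw [e4] at h4 <;>
    rw [e5] at h5 <;> rw [e6] at h6 <;>
    first
      | exact h4 h1 | exact h4 h2 | exact h4 h3
      | exact h5 h1 | exact h5 h2 | exact h5 h3
      | exact h6 h1 | exact h6 h2 | exact h6 h3
      | omega

lemma noP4_of_pattern {G : SimpleGraph V} {y : ℕ → V} {ℓ : ℕ} (p : ℕ → Prop)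
    (hpat : ∀ i j, 1 ≤ i → i < j → j ≤ ℓ → (G.Adj (y i) (y j) ↔ p i)) :
    NoP4 G (y '' Set.Icc 1 ℓ) := by
  rintro ⟨a, b, c, d, ha, hb, hc, hd, hab, hbc, hcd, hac, had, hbd⟩
  obtain ⟨ia, hia, rfl⟩ := ha
  obtain ⟨ib, hib, rfl⟩ := hb
  obtain ⟨ic, hic, rfl⟩ := hc
  obtain ⟨id, hid, rfl⟩ := hd
  simp only [Set.mem_Icc] at hia hib hic hid
  -- vertex distinctness forces index distinctness via the function values
  have hvab : y ia ≠ y ib := G.ne_of_adj hab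
  have hvbc : y ib ≠ y ic := G.ne_of_adj hbc
  have hvcd : y ic ≠ y id := G.ne_of_adj hcd
  have hvac : y ia ≠ y ic := fun e => had (by rw [e]; exact hcd)
  have hvad : y ia ≠ y id := fun e => hac (by rw [e]; exact G.adj_symm hcd)
  have hvbd : y ib ≠ y id := fun e => had (by rw [← e]; exact hab)
  have hab' : ia ≠ ib := fun e => hvab (by rw [e])
  have hac' : ia ≠ ic := fun e => hvac (by rw [e])
  have had' : ia ≠ id := fun e => hvad (by rw [e])
  have hbc' : ib ≠ ic := fun e => hvbc (by rw [e])
  have hbd' : ib ≠ id := fun e => hvbd (by rw [e])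
  have hcd' : ic ≠ id := fun e => hvcd (by rw [e])
  -- convert adjacency info into `p (min _ _)` facts
  have pos : ∀ i j, 1 ≤ i → 1 ≤ j → i ≤ ℓ → j ≤ ℓ → i ≠ j →
      G.Adj (y i) (y j) → p (min i j) := by
    intro i j hi hj hil hjl hij hadj
    rcases Nat.lt_or_ge i j with h | h
    · rw [min_eq_left h.le]
      exact (hpat i j hi h hjl).mp hadj
    · have h' : j < i := by omega
      rw [min_eq_right h'.le]
      exact (hpat j i hj h' hil).mp (G.adj_symm hadj)
  have neg : ∀ i j, 1 ≤ i → 1 ≤ j → i ≤ ℓ → j ≤ ℓ → i ≠ j →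
      ¬ G.Adj (y i) (y j) → ¬ p (min i j) := by
    intro i j hi hj hil hjl hij hnadj hp
    rcases Nat.lt_or_ge i j with h | h
    · rw [min_eq_left h.le] at hp
      exact hnadj ((hpat i j hi h hjl).mpr hp)
    · have h' : j < i := by omega
      rw [min_eq_right h'.le] at hp
      exact hnadj (G.adj_symm ((hpat j i hj h' hil).mpr hp))
  exact min4 hab' hac' had' hbc' hbd' hcd'
    (pos ia ib hia.1 hib.1 hia.2 hib.2 hab' hab)
    (pos ib ic hib.1 hic.1 hib.2 hic.2 hbc' hbc)
    (pos ic id hic.1 hid.1 hic.2 hid.2 hcd' hcd)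
    (neg ia ic hia.1 hic.1 hia.2 hic.2 hac' hac)
    (neg ia id hia.1 hid.1 hia.2 hid.2 had' had)
    (neg ib id hib.1 hid.1 hib.2 hid.2 hbd' hbd)

lemma module_compl {G : SimpleGraph V} {M : Set V}
    (hM : ∀ w ∉ M, (∀ x ∈ M, G.Adj w x) ∨ (∀ x ∈ M, ¬ G.Adj w x)) :
    ∀ w ∉ M, (∀ x ∈ M, Gᶜ.Adj w x) ∨ (∀ x ∈ M, ¬ Gᶜ.Adj w x) := by
  intro w hw
  rcases hM w hw with h | h
  · right; intro x hx h'; exact h'.2 (h x hx)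
  · left; intro x hx; exact ⟨fun e => hw (e ▸ hx), h x hx⟩

lemma no_uniform_vertex {G : SimpleGraph V} (hcard : 4 ≤ Nat.card V)
    (hfin : (Set.univ : Set V).Finite)
    (hmods : ∀ M : Set V, (∀ z ∉ M, (∀ x ∈ M, G.Adj z x) ∨ (∀ x ∈ M, ¬ G.Adj z x)) →
      M = ∅ ∨ (∃ x, M = {x}) ∨ M = Set.univ)
    (u : V) (hu : (∀ x, x ≠ u → ¬ G.Adj u x) ∨ (∀ x, x ≠ u → G.Adj u x)) : False := by
  have hMmod : ∀ z ∉ (Set.univ \ {u} : Set V),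
      (∀ x ∈ (Set.univ \ {u} : Set V), G.Adj z x) ∨
      (∀ x ∈ (Set.univ \ {u} : Set V), ¬ G.Adj z x) := by
    intro z hz
    have hzu : z = u := by
      by_contra h'
      exact hz ⟨Set.mem_univ _, h'⟩
    subst hzu
    rcases hu with h | h
    · right; intro x hx; exact h x (fun e => hx.2 (by simp [e]))
    · left; intro x hx; exact h x (fun e => hx.2 (by simp [e]))
  have hcard2 : 1 < (Set.univ \ {u} : Set V).ncard := by
    rw [Set.ncard_diff_singleton_of_mem (Set.mem_univ u), Set.ncard_univ]
    omega
  obtain ⟨a, b, ha, hb, hne⟩ := (Set.one_lt_ncard_iff (hfin.subset Set.diff_subset)).mp hcard2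
  rcases hmods _ hMmod with h | ⟨x, h⟩ | h
  · exact (h ▸ ha : a ∈ (∅ : Set V))
  · have ha' : a ∈ ({x} : Set V) := h ▸ ha
    have hb' : b ∈ ({x} : Set V) := h ▸ hb
    simp only [Set.mem_singleton_iff] at ha' hb'
    exact hne (ha'.trans hb'.symm)
  · have : u ∈ Set.univ \ ({u} : Set V) := h.symm ▸ Set.mem_univ u
    exact this.2 rfl

end Auxiliary

/-- A finite simple graph `G` is a primitive pseudo-cograph iff `|V| ≥ 4` and
there are a vertex `v` and two sequences `Y = (y₁, …, y_ℓ = v)` and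
`Z = (z₁, …, z_m = v)` of distinct vertices (`ℓ, m ≥ 2`) with
`Y ∩ Z = {v}` and `Y ∪ Z = V`, such that either
(a) `G[Y]` and `G[Z]` are connected and the edges of `G` are exactly the pairs
`{y_i, y_j}` (`1 ≤ i < j ≤ ℓ`, `i` odd) and `{z_i, z_j}` (`1 ≤ i < j ≤ m`,
`i` odd); or
(b) `G[Y]` and `G[Z]` are disconnected and the edges of `G` are exactly the
pairs `{y_i, y_j}` (`1 ≤ i < j ≤ ℓ`, `i` even), `{z_i, z_j}`
(`1 ≤ i < j ≤ m`, `i` even), and all pairs `{y, z}` with `y ∈ Y \ {v}`,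
`z ∈ Z \ {v}`. -/

theorem primitive_pseudoCograph_characterization {V : Type} [Fintype V]
    (G : SimpleGraph V) :
    (IsPrimitive G ∧ IsPseudoCograph G) ↔
      (4 ≤ Nat.card V ∧
        ∃ (v : V) (ℓ m : ℕ) (y z : ℕ → V),
          2 ≤ ℓ ∧ 2 ≤ m ∧
          Set.InjOn y (Set.Icc 1 ℓ) ∧ Set.InjOn z (Set.Icc 1 m) ∧
          y ℓ = v ∧ z m = v ∧
          (y '' Set.Icc 1 ℓ) ∩ (z '' Set.Icc 1 m) = {v} ∧
          (y '' Set.Icc 1 ℓ) ∪ (z '' Set.Icc 1 m) = Set.univ ∧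
          (((G.induce (y '' Set.Icc 1 ℓ)).Connected ∧
            (G.induce (z '' Set.Icc 1 m)).Connected ∧
            (∀ a b : V, G.Adj a b ↔
              ((∃ i j : ℕ, 1 ≤ i ∧ i < j ∧ j ≤ ℓ ∧ Odd i ∧
                  ({a, b} : Set V) = {y i, y j}) ∨
               (∃ i j : ℕ, 1 ≤ i ∧ i < j ∧ j ≤ m ∧ Odd i ∧
                  ({a, b} : Set V) = {z i, z j}))))
           ∨
           (¬ (G.induce (y '' Set.Icc 1 ℓ)).Connected ∧
            ¬ (G.induce (z '' Set.Icc 1 m)).Connected ∧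
            (∀ a b : V, G.Adj a b ↔
              ((∃ i j : ℕ, 1 ≤ i ∧ i < j ∧ j ≤ ℓ ∧ Even i ∧
                  ({a, b} : Set V) = {y i, y j}) ∨
               (∃ i j : ℕ, 1 ≤ i ∧ i < j ∧ j ≤ m ∧ Even i ∧
                  ({a, b} : Set V) = {z i, z j}) ∨
               (∃ i j : ℕ, 1 ≤ i ∧ i < ℓ ∧ 1 ≤ j ∧ j < m ∧
                  ({a, b} : Set V) = {y i, z j})))))) := by
  constructor
  · rintro ⟨⟨hcard, hmods⟩, hpc⟩
    refine ⟨hcard, ?_⟩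
    rcases hpc with hle | ⟨v, V1, V2, hunion, hinter, hn1, hn2, hp41, hp42, hcross⟩
    · exfalso; omega
    have hvV1 : v ∈ V1 := by
      have hmem : v ∈ V1 ∩ V2 := by rw [hinter]; exact rfl
      exact hmem.1
    have hvV2 : v ∈ V2 := by
      have hmem : v ∈ V1 ∩ V2 := by rw [hinter]; exact rfl
      exact hmem.2
    have hfinU : (Set.univ : Set V).Finite := Set.finite_univ
    have hfin1 : V1.Finite := Set.toFinite _
    have hfin2 : V2.Finite := Set.toFinite _
    have hl : 2 ≤ V1.ncard := hn1
    have hm : 2 ≤ V2.ncard := hn2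
    have hmemU : ∀ w : V, w ∈ V1 ∨ w ∈ V2 := by
      intro w
      have : w ∈ V1 ∪ V2 := by rw [hunion]; trivial
      exact this
    rcases hcross with hA | hN
    · -- cross ALL : case (b)
      have hmod1 : ∀ M, ModOn G V1 M → v ∉ M → M.Subsingleton := by
        intro M hMod hvM
        have hGmod : IsModule G M := by
          intro w hwM
          by_cases hwV1 : w ∈ V1
          · exact hMod.2 w ⟨hwV1, hwM⟩
          · left
            intro x hx
            have hxV1 : x ∈ V1 := hMod.1 hx
            have hxv : x ≠ v := fun e => hvM (e ▸ hx)
            have hwV2 : w ∈ V2 := (hmemU w).resolve_left hwV1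
            have hwv : w ≠ v := fun e => hwV1 (e ▸ hvV1)
            exact G.adj_symm (hA x ⟨hxV1, by simp [hxv]⟩ w ⟨hwV2, by simp [hwv]⟩)
        rcases hmods M hGmod with h | ⟨x, h⟩ | h
        · rw [h]; exact Set.subsingleton_empty
        · rw [h]; exact Set.subsingleton_singleton
        · exfalso; apply hvM; rw [h]; trivial
      have hmod2 : ∀ M, ModOn G V2 M → v ∉ M → M.Subsingleton := by
        intro M hMod hvM
        have hGmod : IsModule G M := by
          intro w hwM
          by_cases hwV2 : w ∈ V2
          · exact hMod.2 w ⟨hwV2, hwM⟩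
          · left
            intro x hx
            have hxV2 : x ∈ V2 := hMod.1 hx
            have hxv : x ≠ v := fun e => hvM (e ▸ hx)
            have hwV1 : w ∈ V1 := (hmemU w).resolve_right hwV2
            have hwv : w ≠ v := fun e => hwV2 (e ▸ hvV2)
            exact hA w ⟨hwV1, by simp [hwv]⟩ x ⟨hxV2, by simp [hxv]⟩
        rcases hmods M hGmod with h | ⟨x, h⟩ | h
        · rw [h]; exact Set.subsingleton_empty
        · rw [h]; exact Set.subsingleton_singleton
        · exfalso; apply hvM; rw [h]; trivial
      obtain ⟨y, hyinj, hyimg, hylast, hypat⟩ := buildEnum V1.ncard V1 v hfin1 rfl hvV1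
        (noP4_of_isP4Free hp41) hmod1
      obtain ⟨z, hzinj, hzimg, hzlast, hzpat⟩ := buildEnum V2.ncard V2 v hfin2 rfl hvV2
        (noP4_of_isP4Free hp42) hmod2
      have hy1V1 : y 1 ∈ V1 := by rw [← hyimg]; exact ⟨1, by simp; omega, rfl⟩
      have hz1V2 : z 1 ∈ V2 := by rw [← hzimg]; exact ⟨1, by simp; omega, rfl⟩
      have hy1v : y 1 ≠ v := by
        rw [← hylast]
        intro e
        have := hyinj (by simp; omega) (by simp; omega) e
        omega
      have hz1v : z 1 ≠ v := by
        rw [← hzlast]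
        intro e
        have := hzinj (by simp; omega) (by simp; omega) e
        omega
      have hyV1 : ∀ i, 1 ≤ i → i ≤ V1.ncard → y i ∈ V1 := by
        intro i h1 h2
        rw [← hyimg]; exact ⟨i, by simp; omega, rfl⟩
      have hzV2 : ∀ i, 1 ≤ i → i ≤ V2.ncard → z i ∈ V2 := by
        intro i h1 h2
        rw [← hzimg]; exact ⟨i, by simp; omega, rfl⟩
      have hyv : ∀ i, 1 ≤ i → i < V1.ncard → y i ≠ v := by
        intro i h1 h2
        rw [← hylast]
        intro e
        have := hyinj (by simp; omega) (by simp; omega) e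
        omega
      have hzv : ∀ i, 1 ≤ i → i < V2.ncard → z i ≠ v := by
        intro i h1 h2
        rw [← hzlast]
        intro e
        have := hzinj (by simp; omega) (by simp; omega) e
        omega
      -- pattern must be Even
      have hypatE : ∀ i j, 1 ≤ i → i < j → j ≤ V1.ncard → (G.Adj (y i) (y j) ↔ Even i) := by
        rcases hypat with h | h
        swap
        · exact h
        · exfalso
          apply no_uniform_vertex hcard hfinU hmods (y 1)
          right
          intro x hx
          by_cases hxV1 : x ∈ V1
          · have hxi : x ∈ y '' Set.Icc 1 V1.ncard := by rw [hyimg]; exact hxV1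
            obtain ⟨j, hj, rfl⟩ := hxi
            simp only [Set.mem_Icc] at hj
            have hj1 : j ≠ 1 := fun e => hx (by rw [e])
            exact G.adj_symm ((h 1 j (by omega) (by omega) (by omega)).mpr (by decide)).symm
          · have hxV2 : x ∈ V2 := (hmemU x).resolve_left hxV1
            have hxv : x ≠ v := fun e => hxV1 (e ▸ hvV1)
            exact hA (y 1) ⟨hy1V1, by simp [hy1v]⟩ x ⟨hxV2, by simp [hxv]⟩
      have hzpatE : ∀ i j, 1 ≤ i → i < j → j ≤ V2.ncard → (G.Adj (z i) (z j) ↔ Even i) := by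
        rcases hzpat with h | h
        swap
        · exact h
        · exfalso
          apply no_uniform_vertex hcard hfinU hmods (z 1)
          right
          intro x hx
          by_cases hxV2 : x ∈ V2
          · have hxi : x ∈ z '' Set.Icc 1 V2.ncard := by rw [hzimg]; exact hxV2
            obtain ⟨j, hj, rfl⟩ := hxi
            simp only [Set.mem_Icc] at hj
            have hj1 : j ≠ 1 := fun e => hx (by rw [e])
            exact G.adj_symm ((h 1 j (by omega) (by omega) (by omega)).mpr (by decide)).symm
          · have hxV1 : x ∈ V1 := (hmemU x).resolve_right hxV2
            have hxv : x ≠ v := fun e => hxV2 (e ▸ hvV2)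
            exact G.adj_symm (hA x ⟨hxV1, by simp [hxv]⟩ (z 1) ⟨hz1V2, by simp [hz1v]⟩)
      have hcrossA : ∀ i j, 1 ≤ i → i < V1.ncard → 1 ≤ j → j < V2.ncard →
          G.Adj (y i) (z j) := by
        intro i j hi hil hj hjm
        exact hA (y i) ⟨hyV1 i hi (by omega), by simp [hyv i hi hil]⟩
          (z j) ⟨hzV2 j hj (by omega), by simp [hzv j hj hjm]⟩
      refine ⟨v, V1.ncard, V2.ncard, y, z, hl, hm, hyinj, hzinj, hylast, hzlast, ?_, ?_,
        Or.inr ⟨?_, ?_, ?_⟩⟩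
      · rw [hyimg, hzimg]; exact hinter
      · rw [hyimg, hzimg]; exact hunion
      · exact not_connected_of_isolated hl hyinj (fun j h1 hj hadj => by
          have := (hypatE 1 j (by omega) h1 hj).mp hadj
          simp [Nat.even_iff] at this)
      · exact not_connected_of_isolated hm hzinj (fun j h1 hj hadj => by
          have := (hzpatE 1 j (by omega) h1 hj).mp hadj
          simp [Nat.even_iff] at this)
      · intro a b
        constructor
        · intro hadj
          have hab : a ≠ b := G.ne_of_adj hadj
          by_cases hbothY : a ∈ V1 ∧ b ∈ V1
          · left
            have hai : a ∈ y '' Set.Icc 1 V1.ncard := by rw [hyimg]; exact hbothY.1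
            have hbi : b ∈ y '' Set.Icc 1 V1.ncard := by rw [hyimg]; exact hbothY.2
            obtain ⟨i, hi, rfl⟩ := hai
            obtain ⟨j, hj, rfl⟩ := hbi
            simp only [Set.mem_Icc] at hi hj
            have hij : i ≠ j := fun e => hab (by rw [e])
            rcases Nat.lt_or_ge i j with h | h
            · exact ⟨i, j, hi.1, h, hj.2, (hypatE i j hi.1 h hj.2).mp hadj, rfl⟩
            · have h' : j < i := by omega
              exact ⟨j, i, hj.1, h', hi.2, (hypatE j i hj.1 h' hi.2).mp (G.adj_symm hadj),
                Set.pair_comm _ _⟩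
          · by_cases hbothZ : a ∈ V2 ∧ b ∈ V2
            · right; left
              have hai : a ∈ z '' Set.Icc 1 V2.ncard := by rw [hzimg]; exact hbothZ.1
              have hbi : b ∈ z '' Set.Icc 1 V2.ncard := by rw [hzimg]; exact hbothZ.2
              obtain ⟨i, hi, rfl⟩ := hai
              obtain ⟨j, hj, rfl⟩ := hbi
              simp only [Set.mem_Icc] at hi hj
              have hij : i ≠ j := fun e => hab (by rw [e])
              rcases Nat.lt_or_ge i j with h | h
              · exact ⟨i, j, hi.1, h, hj.2, (hzpatE i j hi.1 h hj.2).mp hadj, rfl⟩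
              · have h' : j < i := by omega
                exact ⟨j, i, hj.1, h', hi.2, (hzpatE j i hj.1 h' hi.2).mp (G.adj_symm hadj),
                  Set.pair_comm _ _⟩
            · right; right
              -- mixed pair
              by_cases haV1 : a ∈ V1
              · have hbV1 : b ∉ V1 := fun h => hbothY ⟨haV1, h⟩
                have hbV2 : b ∈ V2 := (hmemU b).resolve_left hbV1
                have hbv : b ≠ v := fun e => hbV1 (e ▸ hvV1)
                have hav : a ≠ v := by
                  intro e
                  exact hbothZ ⟨e ▸ hvV2, hbV2⟩
                have hai : a ∈ y '' Set.Icc 1 V1.ncard := by rw [hyimg]; exact haV1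
                have hbi : b ∈ z '' Set.Icc 1 V2.ncard := by rw [hzimg]; exact hbV2
                obtain ⟨i, hi, rfl⟩ := hai
                obtain ⟨j, hj, rfl⟩ := hbi
                simp only [Set.mem_Icc] at hi hj
                have hil : i < V1.ncard := by
                  rcases Nat.lt_or_ge i V1.ncard with h | h
                  · exact h
                  · exfalso; apply hav
                    have : i = V1.ncard := by omega
                    rw [this, hylast]
                have hjm : j < V2.ncard := by
                  rcases Nat.lt_or_ge j V2.ncard with h | h
                  · exact h
                  · exfalso; apply hbv
                    have : j = V2.ncard := by omega
                    rw [this, hzlast]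
                exact ⟨i, j, hi.1, hil, hj.1, hjm, rfl⟩
              · have haV2 : a ∈ V2 := (hmemU a).resolve_left haV1
                have hav : a ≠ v := fun e => haV1 (e ▸ hvV1)
                have hbV2 : b ∉ V2 := fun h => hbothZ ⟨haV2, h⟩
                have hbV1 : b ∈ V1 := (hmemU b).resolve_right hbV2
                have hbv : b ≠ v := fun e => hbV2 (e ▸ hvV2)
                have hai : a ∈ z '' Set.Icc 1 V2.ncard := by rw [hzimg]; exact haV2
                have hbi : b ∈ y '' Set.Icc 1 V1.ncard := by rw [hyimg]; exact hbV1
                obtain ⟨i, hi, rfl⟩ := hai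
                obtain ⟨j, hj, rfl⟩ := hbi
                simp only [Set.mem_Icc] at hi hj
                have hil : i < V2.ncard := by
                  rcases Nat.lt_or_ge i V2.ncard with h | h
                  · exact h
                  · exfalso; apply hav
                    have : i = V2.ncard := by omega
                    rw [this, hzlast]
                have hjm : j < V1.ncard := by
                  rcases Nat.lt_or_ge j V1.ncard with h | h
                  · exact h
                  · exfalso; apply hbv
                    have : j = V1.ncard := by omega
                    rw [this, hylast]
                exact ⟨j, i, hj.1, hjm, hi.1, hil, Set.pair_comm _ _⟩
        · rintro (⟨i, j, hi, hij, hj, hp, heq⟩ | ⟨i, j, hi, hij, hj, hp, heq⟩ |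
            ⟨i, j, hi, hil, hj, hjm, heq⟩)
          · rcases pairSet_eq' heq with ⟨h1, h2⟩ | ⟨h1, h2⟩
            · rw [h1, h2]; exact (hypatE i j hi hij hj).mpr hp
            · rw [h1, h2]; exact G.adj_symm ((hypatE i j hi hij hj).mpr hp)
          · rcases pairSet_eq' heq with ⟨h1, h2⟩ | ⟨h1, h2⟩
            · rw [h1, h2]; exact (hzpatE i j hi hij hj).mpr hp
            · rw [h1, h2]; exact G.adj_symm ((hzpatE i j hi hij hj).mpr hp)
          · rcases pairSet_eq' heq with ⟨h1, h2⟩ | ⟨h1, h2⟩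
            · rw [h1, h2]; exact hcrossA i j hi hil hj hjm
            · rw [h1, h2]; exact G.adj_symm (hcrossA i j hi hil hj hjm)
    · -- cross NONE : case (a)
      have hmod1 : ∀ M, ModOn G V1 M → v ∉ M → M.Subsingleton := by
        intro M hMod hvM
        have hGmod : IsModule G M := by
          intro w hwM
          by_cases hwV1 : w ∈ V1
          · exact hMod.2 w ⟨hwV1, hwM⟩
          · right
            intro x hx
            have hxV1 : x ∈ V1 := hMod.1 hx
            have hxv : x ≠ v := fun e => hvM (e ▸ hx)
            have hwV2 : w ∈ V2 := (hmemU w).resolve_left hwV1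
            have hwv : w ≠ v := fun e => hwV1 (e ▸ hvV1)
            intro hadj
            exact hN x ⟨hxV1, by simp [hxv]⟩ w ⟨hwV2, by simp [hwv]⟩ (G.adj_symm hadj)
        rcases hmods M hGmod with h | ⟨x, h⟩ | h
        · rw [h]; exact Set.subsingleton_empty
        · rw [h]; exact Set.subsingleton_singleton
        · exfalso; apply hvM; rw [h]; trivial
      have hmod2 : ∀ M, ModOn G V2 M → v ∉ M → M.Subsingleton := by
        intro M hMod hvM
        have hGmod : IsModule G M := by
          intro w hwM
          by_cases hwV2 : w ∈ V2
          · exact hMod.2 w ⟨hwV2, hwM⟩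
          · right
            intro x hx
            have hxV2 : x ∈ V2 := hMod.1 hx
            have hxv : x ≠ v := fun e => hvM (e ▸ hx)
            have hwV1 : w ∈ V1 := (hmemU w).resolve_right hwV2
            have hwv : w ≠ v := fun e => hwV2 (e ▸ hvV2)
            exact hN w ⟨hwV1, by simp [hwv]⟩ x ⟨hxV2, by simp [hxv]⟩
        rcases hmods M hGmod with h | ⟨x, h⟩ | h
        · rw [h]; exact Set.subsingleton_empty
        · rw [h]; exact Set.subsingleton_singleton
        · exfalso; apply hvM; rw [h]; trivial
      obtain ⟨y, hyinj, hyimg, hylast, hypat⟩ := buildEnum V1.ncard V1 v hfin1 rfl hvV1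
        (noP4_of_isP4Free hp41) hmod1
      obtain ⟨z, hzinj, hzimg, hzlast, hzpat⟩ := buildEnum V2.ncard V2 v hfin2 rfl hvV2
        (noP4_of_isP4Free hp42) hmod2
      have hy1V1 : y 1 ∈ V1 := by rw [← hyimg]; exact ⟨1, by simp; omega, rfl⟩
      have hz1V2 : z 1 ∈ V2 := by rw [← hzimg]; exact ⟨1, by simp; omega, rfl⟩
      have hy1v : y 1 ≠ v := by
        rw [← hylast]
        intro e
        have := hyinj (by simp; omega) (by simp; omega) e
        omega
      have hz1v : z 1 ≠ v := by
        rw [← hzlast]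
        intro e
        have := hzinj (by simp; omega) (by simp; omega) e
        omega
      have hyV1 : ∀ i, 1 ≤ i → i ≤ V1.ncard → y i ∈ V1 := by
        intro i h1 h2
        rw [← hyimg]; exact ⟨i, by simp; omega, rfl⟩
      have hzV2 : ∀ i, 1 ≤ i → i ≤ V2.ncard → z i ∈ V2 := by
        intro i h1 h2
        rw [← hzimg]; exact ⟨i, by simp; omega, rfl⟩
      have hyv : ∀ i, 1 ≤ i → i < V1.ncard → y i ≠ v := by
        intro i h1 h2
        rw [← hylast]
        intro e
        have := hyinj (by simp; omega) (by simp; omega) e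
        omega
      have hzv : ∀ i, 1 ≤ i → i < V2.ncard → z i ≠ v := by
        intro i h1 h2
        rw [← hzlast]
        intro e
        have := hzinj (by simp; omega) (by simp; omega) e
        omega
      -- pattern must be Odd
      have hypatO : ∀ i j, 1 ≤ i → i < j → j ≤ V1.ncard → (G.Adj (y i) (y j) ↔ Odd i) := by
        rcases hypat with h | h
        · exact h
        · exfalso
          apply no_uniform_vertex hcard hfinU hmods (y 1)
          left
          intro x hx hadj
          by_cases hxV1 : x ∈ V1
          · have hxi : x ∈ y '' Set.Icc 1 V1.ncard := by rw [hyimg]; exact hxV1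
            obtain ⟨j, hj, rfl⟩ := hxi
            simp only [Set.mem_Icc] at hj
            have hj1 : j ≠ 1 := fun e => hx (by rw [e])
            have := (h 1 j (by omega) (by omega) (by omega)).mp hadj
            simp [Nat.even_iff] at this
          · have hxV2 : x ∈ V2 := (hmemU x).resolve_left hxV1
            have hxv : x ≠ v := fun e => hxV1 (e ▸ hvV1)
            exact hN (y 1) ⟨hy1V1, by simp [hy1v]⟩ x ⟨hxV2, by simp [hxv]⟩ hadj
      have hzpatO : ∀ i j, 1 ≤ i → i < j → j ≤ V2.ncard → (G.Adj (z i) (z j) ↔ Odd i) := by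
        rcases hzpat with h | h
        · exact h
        · exfalso
          apply no_uniform_vertex hcard hfinU hmods (z 1)
          left
          intro x hx hadj
          by_cases hxV2 : x ∈ V2
          · have hxi : x ∈ z '' Set.Icc 1 V2.ncard := by rw [hzimg]; exact hxV2
            obtain ⟨j, hj, rfl⟩ := hxi
            simp only [Set.mem_Icc] at hj
            have hj1 : j ≠ 1 := fun e => hx (by rw [e])
            have := (h 1 j (by omega) (by omega) (by omega)).mp hadj
            simp [Nat.even_iff] at this
          · have hxV1 : x ∈ V1 := (hmemU x).resolve_right hxV2
            have hxv : x ≠ v := fun e => hxV2 (e ▸ hvV2)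
            exact hN x ⟨hxV1, by simp [hxv]⟩ (z 1) ⟨hz1V2, by simp [hz1v]⟩ (G.adj_symm hadj)
      have hcrossN : ∀ i j, 1 ≤ i → i < V1.ncard → 1 ≤ j → j < V2.ncard →
          ¬ G.Adj (y i) (z j) := by
        intro i j hi hil hj hjm
        exact hN (y i) ⟨hyV1 i hi (by omega), by simp [hyv i hi hil]⟩
          (z j) ⟨hzV2 j hj (by omega), by simp [hzv j hj hjm]⟩
      refine ⟨v, V1.ncard, V2.ncard, y, z, hl, hm, hyinj, hzinj, hylast, hzlast, ?_, ?_,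
        Or.inl ⟨?_, ?_, ?_⟩⟩
      · rw [hyimg, hzimg]; exact hinter
      · rw [hyimg, hzimg]; exact hunion
      · exact connected_of_hub hl (fun j h1 hj =>
          (hypatO 1 j (by omega) h1 hj).mpr (by decide))
      · exact connected_of_hub hm (fun j h1 hj =>
          (hzpatO 1 j (by omega) h1 hj).mpr (by decide))
      · intro a b
        constructor
        · intro hadj
          have hab : a ≠ b := G.ne_of_adj hadj
          by_cases hbothY : a ∈ V1 ∧ b ∈ V1
          · left
            have hai : a ∈ y '' Set.Icc 1 V1.ncard := by rw [hyimg]; exact hbothY.1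
            have hbi : b ∈ y '' Set.Icc 1 V1.ncard := by rw [hyimg]; exact hbothY.2
            obtain ⟨i, hi, rfl⟩ := hai
            obtain ⟨j, hj, rfl⟩ := hbi
            simp only [Set.mem_Icc] at hi hj
            have hij : i ≠ j := fun e => hab (by rw [e])
            rcases Nat.lt_or_ge i j with h | h
            · exact ⟨i, j, hi.1, h, hj.2, (hypatO i j hi.1 h hj.2).mp hadj, rfl⟩
            · have h' : j < i := by omega
              exact ⟨j, i, hj.1, h', hi.2, (hypatO j i hj.1 h' hi.2).mp (G.adj_symm hadj),
                Set.pair_comm _ _⟩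
          · by_cases hbothZ : a ∈ V2 ∧ b ∈ V2
            · right
              have hai : a ∈ z '' Set.Icc 1 V2.ncard := by rw [hzimg]; exact hbothZ.1
              have hbi : b ∈ z '' Set.Icc 1 V2.ncard := by rw [hzimg]; exact hbothZ.2
              obtain ⟨i, hi, rfl⟩ := hai
              obtain ⟨j, hj, rfl⟩ := hbi
              simp only [Set.mem_Icc] at hi hj
              have hij : i ≠ j := fun e => hab (by rw [e])
              rcases Nat.lt_or_ge i j with h | h
              · exact ⟨i, j, hi.1, h, hj.2, (hzpatO i j hi.1 h hj.2).mp hadj, rfl⟩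
              · have h' : j < i := by omega
                exact ⟨j, i, hj.1, h', hi.2, (hzpatO j i hj.1 h' hi.2).mp (G.adj_symm hadj),
                  Set.pair_comm _ _⟩
            · exfalso
              by_cases haV1 : a ∈ V1
              · have hbV1 : b ∉ V1 := fun h => hbothY ⟨haV1, h⟩
                have hbV2 : b ∈ V2 := (hmemU b).resolve_left hbV1
                have hbv : b ≠ v := fun e => hbV1 (e ▸ hvV1)
                have hav : a ≠ v := fun e => hbothZ ⟨e ▸ hvV2, hbV2⟩
                exact hN a ⟨haV1, by simp [hav]⟩ b ⟨hbV2, by simp [hbv]⟩ hadj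
              · have haV2 : a ∈ V2 := (hmemU a).resolve_left haV1
                have hav : a ≠ v := fun e => haV1 (e ▸ hvV1)
                have hbV2 : b ∉ V2 := fun h => hbothZ ⟨haV2, h⟩
                have hbV1 : b ∈ V1 := (hmemU b).resolve_right hbV2
                have hbv : b ≠ v := fun e => hbV2 (e ▸ hvV2)
                exact hN b ⟨hbV1, by simp [hbv]⟩ a ⟨haV2, by simp [hav]⟩ (G.adj_symm hadj)
        · rintro (⟨i, j, hi, hij, hj, hp, heq⟩ | ⟨i, j, hi, hij, hj, hp, heq⟩)
          · rcases pairSet_eq' heq with ⟨h1, h2⟩ | ⟨h1, h2⟩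
            · rw [h1, h2]; exact (hypatO i j hi hij hj).mpr hp
            · rw [h1, h2]; exact G.adj_symm ((hypatO i j hi hij hj).mpr hp)
          · rcases pairSet_eq' heq with ⟨h1, h2⟩ | ⟨h1, h2⟩
            · rw [h1, h2]; exact (hzpatO i j hi hij hj).mpr hp
            · rw [h1, h2]; exact G.adj_symm ((hzpatO i j hi hij hj).mpr hp)
  · rintro ⟨hcard, v, ℓ, m, y, z, hl, hm, hyinj, hzinj, hyl, hzm, hinter, hunion, hcase⟩
    have hcardY : (y '' Set.Icc 1 ℓ).ncard = ℓ := by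
      rw [Set.ncard_image_of_injOn hyinj, ← Finset.coe_Icc, Set.ncard_coe_finset, Nat.card_Icc]
      omega
    have hcardZ : (z '' Set.Icc 1 m).ncard = m := by
      rw [Set.ncard_image_of_injOn hzinj, ← Finset.coe_Icc, Set.ncard_coe_finset, Nat.card_Icc]
      omega
    have hinter' : (z '' Set.Icc 1 m) ∩ (y '' Set.Icc 1 ℓ) = {v} := by
      rw [Set.inter_comm]; exact hinter
    rcases hcase with ⟨hc1, hc2, hchar⟩ | ⟨hn1, hn2, hchar⟩
    · -- case (a)
      have hpatY := patY_of_charA hyinj hinter Odd hchar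
      have hcharZ : ∀ a b, G.Adj a b ↔
          ((∃ i j, 1 ≤ i ∧ i < j ∧ j ≤ m ∧ Odd i ∧ ({a, b} : Set V) = {z i, z j}) ∨
           (∃ i j, 1 ≤ i ∧ i < j ∧ j ≤ ℓ ∧ Odd i ∧ ({a, b} : Set V) = {y i, y j})) :=
        fun a b => (hchar a b).trans or_comm
      have hpatZ := patY_of_charA hzinj hinter' Odd hcharZ
      have hcrossN := crossNone_of_charA hyinj hzinj hyl hzm hinter Odd hchar
      constructor
      · exact ⟨hcard, fun M hM =>
          primitivity_caseA hl hm hyinj hzinj hyl hzm hunion hpatY hpatZ hcrossN hcard hM⟩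
      · right
        refine ⟨v, _, _, hunion, hinter, by rw [hcardY]; omega, by rw [hcardZ]; omega,
          isP4Free_of_noP4 (noP4_of_pattern Odd hpatY),
          isP4Free_of_noP4 (noP4_of_pattern Odd hpatZ), Or.inr ?_⟩
        rintro x ⟨hxY, hxv⟩ w ⟨hwZ, hwv⟩
        obtain ⟨i, hi, rfl⟩ := hxY
        obtain ⟨j, hj, rfl⟩ := hwZ
        simp only [Set.mem_Icc] at hi hj
        have hil : i < ℓ := by
          rcases Nat.lt_or_ge i ℓ with h | h
          · exact h
          · exfalso
            apply hxv
            have : i = ℓ := by omega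
            simp [this, hyl]
        have hjm : j < m := by
          rcases Nat.lt_or_ge j m with h | h
          · exact h
          · exfalso
            apply hwv
            have : j = m := by omega
            simp [this, hzm]
        exact hcrossN i j hi.1 hil hj.1 hjm
    · -- case (b)
      have hpatY := patY_of_charB hyinj hzinj hzm hinter Even hchar
      have hcharZ : ∀ a b, G.Adj a b ↔
          ((∃ i j, 1 ≤ i ∧ i < j ∧ j ≤ m ∧ Even i ∧ ({a, b} : Set V) = {z i, z j}) ∨
           (∃ i j, 1 ≤ i ∧ i < j ∧ j ≤ ℓ ∧ Even i ∧ ({a, b} : Set V) = {y i, y j}) ∨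
           (∃ i j, 1 ≤ i ∧ i < m ∧ 1 ≤ j ∧ j < ℓ ∧ ({a, b} : Set V) = {z i, y j})) := by
        intro a b
        rw [hchar a b]
        constructor
        · rintro (h | h | ⟨i, j, h1, h2, h3, h4, heq⟩)
          · exact Or.inr (Or.inl h)
          · exact Or.inl h
          · exact Or.inr (Or.inr ⟨j, i, h3, h4, h1, h2, by rw [heq, Set.pair_comm]⟩)
        · rintro (h | h | ⟨i, j, h1, h2, h3, h4, heq⟩)
          · exact Or.inr (Or.inl h)
          · exact Or.inl h
          · exact Or.inr (Or.inr ⟨j, i, h3, h4, h1, h2, by rw [heq, Set.pair_comm]⟩)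
      have hpatZ := patY_of_charB hzinj hyinj hyl hinter' Even hcharZ
      have hcrossA := crossAll_of_charB Even hchar
      have hpatYc : ∀ i j, 1 ≤ i → i < j → j ≤ ℓ → (Gᶜ.Adj (y i) (y j) ↔ Odd i) := by
        intro i j hi hij hj
        rw [SimpleGraph.compl_adj]
        constructor
        · rintro ⟨hne, hnadj⟩
          rw [hpatY i j hi hij hj] at hnadj
          rw [Nat.odd_iff]; rw [Nat.even_iff] at hnadj; omega
        · intro ho
          refine ⟨fun e => ?_, fun ha => ?_⟩
          · have := hyinj (by simp; omega) (by simp; omega) e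
            omega
          · have := (hpatY i j hi hij hj).mp ha
            rw [Nat.odd_iff] at ho; rw [Nat.even_iff] at this; omega
      have hpatZc : ∀ i j, 1 ≤ i → i < j → j ≤ m → (Gᶜ.Adj (z i) (z j) ↔ Odd i) := by
        intro i j hi hij hj
        rw [SimpleGraph.compl_adj]
        constructor
        · rintro ⟨hne, hnadj⟩
          rw [hpatZ i j hi hij hj] at hnadj
          rw [Nat.odd_iff]; rw [Nat.even_iff] at hnadj; omega
        · intro ho
          refine ⟨fun e => ?_, fun ha => ?_⟩
          · have := hzinj (by simp; omega) (by simp; omega) e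
            omega
          · have := (hpatZ i j hi hij hj).mp ha
            rw [Nat.odd_iff] at ho; rw [Nat.even_iff] at this; omega
      have hcrossNc : ∀ i j, 1 ≤ i → i < ℓ → 1 ≤ j → j < m → ¬ Gᶜ.Adj (y i) (z j) := by
        intro i j hi hil hj hjm h'
        exact h'.2 (hcrossA i j hi hil hj hjm)
      constructor
      · refine ⟨hcard, fun M hM => ?_⟩
        exact primitivity_caseA (G := Gᶜ) hl hm hyinj hzinj hyl hzm hunion hpatYc hpatZc
          hcrossNc hcard (module_compl hM)
      · right
        refine ⟨v, _, _, hunion, hinter, by rw [hcardY]; omega, by rw [hcardZ]; omega,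
          isP4Free_of_noP4 (noP4_of_pattern Even hpatY),
          isP4Free_of_noP4 (noP4_of_pattern Even hpatZ), Or.inl ?_⟩
        rintro x ⟨hxY, hxv⟩ w ⟨hwZ, hwv⟩
        obtain ⟨i, hi, rfl⟩ := hxY
        obtain ⟨j, hj, rfl⟩ := hwZ
        simp only [Set.mem_Icc] at hi hj
        have hil : i < ℓ := by
          rcases Nat.lt_or_ge i ℓ with h | h
          · exact h
          · exfalso
            apply hxv
            have : i = ℓ := by omega
            simp [this, hyl]
        have hjm : j < m := by
          rcases Nat.lt_or_ge j m with h | h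
          · exact h
          · exfalso
            apply hwv
            have : j = m := by omega
            simp [this, hzm]
        exact hcrossA i j hi.1 hil hj.1 hjm
end
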